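/- arXiv:2602.03058 — 2 statements merged into one kernel-verified Lean document; each statement's English description precedes it below -/
import Mathlib

section
/- Let k be a nonnegative integer, k < p < k+1, and n ≥ 1. Let 𝓔_1, ..., 𝓔_n be i.i.d. standard exponential random variables, and for x_1, ..., x_n ≥ 0 define M_p(x_1,...,x_n) = E[(Σ_{j=1}^n √(x_j)·𝓔_j)^p] and F_k(x_1,...,x_n) = E[Q_k(Σ_{j=1}^n √(x_j)·𝓔_j)]. Then M_p(x_1, ..., x_n) = C_p^{−1} · ∫_0^∞ F_k(t²x_1, ..., t²x_n)·t^{−p−1} dt. -/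
open MeasureTheory ProbabilityTheory Real Set

noncomputable def Q (k : ℕ) (t : ℝ) : ℝ :=
  (-1) ^ (k + 1) *
    (Real.exp (-t) - ∑ j ∈ Finset.range (k + 1), (-1) ^ j * t ^ j / (Nat.factorial j))

lemma Q_zero (k : ℕ) : Q k 0 = 0 := by
  simp [Q, Finset.sum_range_succ']

lemma Q_continuous (k : ℕ) : Continuous (Q k) := by
  unfold Q
  fun_prop

lemma Q_hasDerivAt (k : ℕ) (t : ℝ) : HasDerivAt (Q (k + 1)) (Q k t) t := by
  have h1 : HasDerivAt (fun s : ℝ => Real.exp (-s)) (-Real.exp (-t)) t := by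
    simpa [Function.comp_def] using (Real.hasDerivAt_exp (-t)).comp t (hasDerivAt_neg t)
  have h2 : HasDerivAt (fun s : ℝ => ∑ j ∈ Finset.range (k + 2), (-1 : ℝ) ^ j * s ^ j / (Nat.factorial j))
      (∑ j ∈ Finset.range (k + 2), (-1 : ℝ) ^ j * ((j : ℝ) * t ^ (j - 1)) / (Nat.factorial j)) t := by
    apply HasDerivAt.fun_sum
    intro j _
    simpa [mul_div_assoc] using ((hasDerivAt_pow j t).const_mul ((-1 : ℝ) ^ j)).div_const (Nat.factorial j)
  have h3 : HasDerivAt (Q (k + 1))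
      ((-1 : ℝ) ^ (k + 2) * (-Real.exp (-t) - ∑ j ∈ Finset.range (k + 2), (-1 : ℝ) ^ j * ((j : ℝ) * t ^ (j - 1)) / (Nat.factorial j))) t := by
    exact (h1.sub h2).const_mul _
  convert h3 using 1
  have : ∑ j ∈ Finset.range (k + 2), (-1 : ℝ) ^ j * ((j : ℝ) * t ^ (j - 1)) / (Nat.factorial j)
      = -∑ j ∈ Finset.range (k + 1), (-1 : ℝ) ^ j * t ^ j / (Nat.factorial j) := by
    rw [Finset.sum_range_succ']
    simp only [Nat.cast_zero, zero_mul, mul_zero, zero_div, add_zero]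
    rw [← Finset.sum_neg_distrib]
    apply Finset.sum_congr rfl
    intro i _
    have : ((Nat.factorial (i+1) : ℝ)) = (i+1) * Nat.factorial i := by
      push_cast [Nat.factorial_succ]; ring
    rw [this]
    have hfac : (Nat.factorial i : ℝ) ≠ 0 := Nat.cast_ne_zero.mpr (Nat.factorial_ne_zero i)
    have hi1 : ((i:ℝ)+1) ≠ 0 := by positivity
    simp only [pow_succ, Nat.add_sub_cancel, Nat.cast_add, Nat.cast_one]
    field_simp
  rw [this, Q]
  ring





lemma Q_zero_eq (t : ℝ) : Q 0 t = 1 - Real.exp (-t) := by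
  simp [Q]

lemma Q_deriv (k : ℕ) : deriv (Q (k + 1)) = Q k := by
  ext t; exact (Q_hasDerivAt k t).deriv

lemma Q_nonneg (k : ℕ) : ∀ t : ℝ, 0 ≤ t → 0 ≤ Q k t := by
  induction k with
  | zero =>
    intro t ht
    rw [Q_zero_eq]
    have := Real.exp_le_one_iff (x := -t)
    simp only [neg_nonpos] at this
    linarith [this.mpr ht]
  | succ k ih =>
    intro t ht
    have hmono : MonotoneOn (Q (k + 1)) (Ici 0) := by
      apply monotoneOn_of_deriv_nonneg (convex_Ici 0) (Q_continuous (k+1)).continuousOn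
      · intro s _
        exact (Q_hasDerivAt k s).differentiableAt.differentiableWithinAt
      · intro s hs
        rw [Q_deriv]
        exact ih s (le_of_lt (by simpa using hs))
    have := hmono (self_mem_Ici) (mem_Ici.mpr ht) ht
    rwa [Q_zero k.succ] at this

lemma Q_pos (k : ℕ) : ∀ t : ℝ, 0 < t → 0 < Q k t := by
  induction k with
  | zero =>
    intro t ht
    rw [Q_zero_eq]
    have : Real.exp (-t) < 1 := Real.exp_lt_one_iff.mpr (by linarith)
    linarith
  | succ k ih =>
    intro t ht
    have hmono : StrictMonoOn (Q (k + 1)) (Ici 0) := by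
      apply strictMonoOn_of_deriv_pos (convex_Ici 0) (Q_continuous (k+1)).continuousOn
      intro s hs
      rw [Q_deriv]
      exact ih s (by simpa using hs)
    have := hmono self_mem_Ici (mem_Ici.mpr ht.le) ht
    rwa [Q_zero k.succ] at this

lemma Q_le_pow (k : ℕ) : ∀ t : ℝ, 0 ≤ t → Q k t ≤ t ^ (k + 1) / Nat.factorial (k + 1) := by
  induction k with
  | zero =>
    intro t ht
    have h : t ^ (0+1) / (Nat.factorial (0+1) : ℝ) = t := by norm_num
    rw [Q_zero_eq, h]
    linarith [Real.add_one_le_exp (-t)]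
  | succ k ih =>
    intro t ht
    set g : ℝ → ℝ := fun s => s ^ (k + 2) / Nat.factorial (k + 2) - Q (k + 1) s with hg
    have hderiv : ∀ s : ℝ, HasDerivAt g (s ^ (k + 1) / Nat.factorial (k + 1) - Q k s) s := by
      intro s
      have h1 : HasDerivAt (fun s : ℝ => s ^ (k + 2) / Nat.factorial (k + 2))
          (((k : ℝ) + 2) * s ^ (k + 1) / Nat.factorial (k + 2)) s := by
        simpa [mul_div_assoc] using (hasDerivAt_pow (k + 2) s).div_const (Nat.factorial (k + 2))
      have heq : ((k : ℝ) + 2) * s ^ (k + 1) / Nat.factorial (k + 2)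
          = s ^ (k + 1) / Nat.factorial (k + 1) := by
        have : ((Nat.factorial (k + 2) : ℝ)) = (k + 2) * Nat.factorial (k + 1) := by
          push_cast [Nat.factorial_succ]; ring
        rw [this]
        have hfac : (Nat.factorial (k+1) : ℝ) ≠ 0 := Nat.cast_ne_zero.mpr (Nat.factorial_ne_zero _)
        have h2 : ((k:ℝ)+2) ≠ 0 := by positivity
        field_simp
      rw [heq] at h1
      exact h1.sub (Q_hasDerivAt k s)
    have hmono : MonotoneOn g (Ici 0) := by
      apply monotoneOn_of_deriv_nonneg (convex_Ici 0)
      · exact (Continuous.continuousOn (by continuity)).sub (Q_continuous (k+1)).continuousOn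
      · intro s _; exact (hderiv s).differentiableAt.differentiableWithinAt
      · intro s hs
        rw [(hderiv s).deriv]
        have hs' : (0:ℝ) < s := by simpa using hs
        have := ih s hs'.le
        linarith
    have h0 : g 0 = 0 := by simp [hg, Q_zero]
    have := hmono self_mem_Ici (mem_Ici.mpr ht) ht
    rw [h0] at this
    simpa [hg] using this

lemma abs_Q_le (k : ℕ) (t : ℝ) (ht : 0 ≤ t) :
    |Q k t| ≤ 1 + ∑ j ∈ Finset.range (k + 1), t ^ j / Nat.factorial j := by
  rw [Q, abs_mul, abs_pow, abs_neg, abs_one, one_pow, one_mul]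
  calc |Real.exp (-t) - ∑ j ∈ Finset.range (k + 1), (-1:ℝ) ^ j * t ^ j / (Nat.factorial j)|
      ≤ |Real.exp (-t)| + |∑ j ∈ Finset.range (k + 1), (-1:ℝ) ^ j * t ^ j / (Nat.factorial j)| :=
        abs_sub _ _
    _ ≤ 1 + ∑ j ∈ Finset.range (k + 1), t ^ j / Nat.factorial j := by
        gcongr
        · rw [abs_of_pos (Real.exp_pos _)]
          exact Real.exp_le_one_iff.mpr (by linarith)
        · refine (Finset.abs_sum_le_sum_abs _ _).trans ?_
          apply Finset.sum_le_sum
          intro j _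
          rw [abs_div, abs_mul, abs_pow, abs_neg, abs_one, one_pow, one_mul, abs_pow,
            abs_of_nonneg ht, Nat.abs_cast]





lemma f_measurable (k : ℕ) (p : ℝ) : Measurable (fun t : ℝ => Q k t * t ^ (-p - 1)) :=
  (Q_continuous k).measurable.mul (measurable_id.pow_const _)

lemma f_integrable {k : ℕ} {p : ℝ} (hk : (k : ℝ) < p) (hk' : p < k + 1) :
    IntegrableOn (fun t : ℝ => Q k t * t ^ (-p - 1)) (Ioi 0) := by
  have hkp : (0:ℝ) < p := lt_of_le_of_lt (Nat.cast_nonneg k) hk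
  have h1 : IntegrableOn (fun t : ℝ => Q k t * t ^ (-p - 1)) (Ioc 0 1) := by
    have hint : IntegrableOn (fun t : ℝ => t ^ ((k:ℝ) - p)) (Ioc 0 1) := by
      rw [← intervalIntegrable_iff_integrableOn_Ioc_of_le (by norm_num : (0:ℝ) ≤ 1)]
      exact intervalIntegral.intervalIntegrable_rpow' (by linarith)
    refine Integrable.mono' hint ((f_measurable k p).aestronglyMeasurable) ?_
    rw [ae_restrict_iff' measurableSet_Ioc]
    filter_upwards with t ht
    obtain ⟨ht0, ht1⟩ := ht
    rw [Real.norm_eq_abs, abs_mul, abs_of_nonneg (Q_nonneg k t ht0.le),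
      abs_of_nonneg (Real.rpow_nonneg ht0.le _)]
    have hfac : (1:ℝ) ≤ Nat.factorial (k+1) := by exact_mod_cast Nat.one_le_iff_ne_zero.mpr (Nat.factorial_ne_zero _)
    have hQ : Q k t ≤ t ^ ((k:ℝ) + 1) := by
      refine (Q_le_pow k t ht0.le).trans ?_
      rw [← Real.rpow_natCast t (k+1)]
      push_cast
      calc t ^ ((k:ℝ)+1) / (Nat.factorial (k+1) : ℝ) ≤ t ^ ((k:ℝ)+1) / 1 := by
            gcongr
        _ = t ^ ((k:ℝ)+1) := by ring
    calc Q k t * t ^ (-p - 1) ≤ t ^ ((k:ℝ)+1) * t ^ (-p-1) :=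
          mul_le_mul_of_nonneg_right hQ (Real.rpow_nonneg ht0.le _)
      _ = t ^ ((k:ℝ) - p) := by
          rw [← Real.rpow_add ht0]; ring_nf
  have h2 : IntegrableOn (fun t : ℝ => Q k t * t ^ (-p - 1)) (Ioi 1) := by
    have hint : IntegrableOn (fun t : ℝ =>
        t ^ (-p - 1) + ∑ j ∈ Finset.range (k + 1), t ^ ((j:ℝ) - p - 1) / Nat.factorial j)
        (Ioi 1) := by
      refine (integrableOn_Ioi_rpow_of_lt (by linarith) one_pos).add ?_
      refine integrable_finset_sum _ (fun j hj => ?_)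
      have hjk : (j:ℝ) ≤ k := by
        exact_mod_cast Nat.lt_succ_iff.mp (Finset.mem_range.mp hj)
      exact (integrableOn_Ioi_rpow_of_lt (by linarith) one_pos).div_const _
    refine Integrable.mono' hint ((f_measurable k p).aestronglyMeasurable) ?_
    rw [ae_restrict_iff' measurableSet_Ioi]
    filter_upwards with t ht
    have ht0 : (0:ℝ) < t := lt_trans one_pos ht
    rw [Real.norm_eq_abs, abs_mul, abs_of_nonneg (Real.rpow_nonneg ht0.le _)]
    calc |Q k t| * t ^ (-p - 1)
        ≤ (1 + ∑ j ∈ Finset.range (k + 1), t ^ j / Nat.factorial j) * t ^ (-p-1) :=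
          mul_le_mul_of_nonneg_right (abs_Q_le k t ht0.le) (Real.rpow_nonneg ht0.le _)
      _ = t ^ (-p - 1) + ∑ j ∈ Finset.range (k + 1), t ^ ((j:ℝ) - p - 1) / Nat.factorial j := by
          rw [add_mul, one_mul, Finset.sum_mul]
          congr 1
          refine Finset.sum_congr rfl (fun j _ => ?_)
          rw [div_mul_eq_mul_div, ← Real.rpow_natCast t j, ← Real.rpow_add ht0]
          ring_nf
  have : Ioi (0:ℝ) = Ioc 0 1 ∪ Ioi 1 := (Ioc_union_Ioi_eq_Ioi (by norm_num)).symm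
  rw [this]
  exact h1.union h2

lemma Cp_pos {k : ℕ} {p : ℝ} (hk : (k : ℝ) < p) (hk' : p < k + 1) :
    0 < ∫ t in Ioi (0:ℝ), Q k t * t ^ (-p - 1) := by
  have hnonneg : 0 ≤ᵐ[volume.restrict (Ioi (0:ℝ))] fun t => Q k t * t ^ (-p - 1) := by
    have : ∀ᵐ t ∂(volume.restrict (Ioi (0:ℝ))), 0 ≤ Q k t * t ^ (-p - 1) := by
      rw [ae_restrict_iff' measurableSet_Ioi]
      filter_upwards with t ht
      exact mul_nonneg (Q_nonneg k t (le_of_lt ht)) (Real.rpow_nonneg (le_of_lt ht) _)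
    exact this
  rw [setIntegral_pos_iff_support_of_nonneg_ae hnonneg (f_integrable hk hk')]
  have hsub : Ioi (0:ℝ) ⊆ Function.support (fun t => Q k t * t ^ (-p - 1)) ∩ Ioi 0 := by
    intro t ht
    refine ⟨?_, ht⟩
    exact ne_of_gt (mul_pos (Q_pos k t ht) (Real.rpow_pos_of_pos ht _))
  calc (0:ENNReal) < volume (Ioi (0:ℝ)) := by simp
    _ ≤ _ := measure_mono hsub

lemma scaling {k : ℕ} {p : ℝ} (hk : (k : ℝ) < p) (hk' : p < k + 1) {s : ℝ} (hs : 0 < s) :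
    ∫ t in Ioi (0:ℝ), Q k (t * s) * t ^ (-p - 1)
      = (∫ t in Ioi (0:ℝ), Q k t * t ^ (-p - 1)) * s ^ p := by
  have key : ∀ t ∈ Ioi (0:ℝ), Q k (t * s) * t ^ (-p - 1)
      = s ^ (p + 1) * ((fun u => Q k u * u ^ (-p - 1)) (t * s)) := by
    intro t ht
    simp only
    rw [Real.mul_rpow (le_of_lt ht) hs.le]
    have h2 : s ^ (p+1) * s ^ (-p-1) = 1 := by
      rw [← Real.rpow_add hs]; norm_num
    linear_combination (-(Q k (t*s) * t ^ (-p-1))) * h2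
  rw [setIntegral_congr_fun measurableSet_Ioi key, integral_const_mul,
    integral_comp_mul_right_Ioi (fun u => Q k u * u ^ (-p - 1)) 0 hs]
  have h3 : s ^ (p+1) * s⁻¹ = s ^ p := by
    rw [← Real.rpow_neg_one s, ← Real.rpow_add hs]; norm_num
  rw [zero_mul, smul_eq_mul]
  linear_combination (∫ t in Ioi (0:ℝ), Q k t * t ^ (-p - 1)) * h3





lemma key_eq (k : ℕ) (p : ℝ) {s t : ℝ} (hs : 0 < s) (ht : 0 < t) :
    Q k (t * s) * t ^ (-p - 1) = s ^ (p + 1) * (Q k (t * s) * (t * s) ^ (-p - 1)) := by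
  rw [Real.mul_rpow ht.le hs.le]
  have h2 : s ^ (p+1) * s ^ (-p-1) = 1 := by
    rw [← Real.rpow_add hs]; norm_num
  linear_combination (-(Q k (t*s) * t ^ (-p-1))) * h2

lemma expMeasure_Iio : expMeasure 1 (Iio 0) = 0 := by
  rw [expMeasure, gammaMeasure, withDensity_apply _ measurableSet_Iio]
  exact lintegral_gammaPDF_of_nonpos le_rfl

lemma integrable_rpow_exp {p : ℝ} (hp : 0 < p) :
    Integrable (fun u : ℝ => ‖u‖ ^ p) (expMeasure 1) := by
  rw [expMeasure, gammaMeasure,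
    integrable_withDensity_iff (f := gammaPDF 1 1)
      ((measurable_gammaPDFReal 1 1).ennreal_ofReal)
      (Filter.Eventually.of_forall fun x => ENNReal.ofReal_lt_top)]
  have hind : Integrable ((Ioi (0:ℝ)).indicator fun u => Real.exp (-u) * u ^ p) := by
    rw [integrable_indicator_iff measurableSet_Ioi]
    exact (Real.GammaIntegral_convergent (by linarith : (0:ℝ) < p + 1)).congr_fun
      (fun u hu => by rw [show p + 1 - 1 = p by ring]) measurableSet_Ioi
  refine hind.congr (Filter.Eventually.of_forall fun u => ?_)
  show (Ioi (0:ℝ)).indicator (fun u => Real.exp (-u) * u ^ p) u = ‖u‖ ^ p * (gammaPDF 1 1 u).toReal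
  rcases lt_trichotomy u 0 with hu | hu | hu
  · rw [indicator_of_notMem (by simpa using hu.not_gt), gammaPDF_of_neg hu]
    simp
  · subst hu
    rw [indicator_of_notMem (by simp)]
    simp [Real.zero_rpow hp.ne']
  · rw [Set.indicator_of_mem (show u ∈ Ioi (0:ℝ) from hu), gammaPDF_of_nonneg hu.le]
    rw [ENNReal.toReal_ofReal (by positivity)]
    rw [Real.norm_eq_abs, abs_of_pos hu]
    rw [Real.rpow_one, Real.Gamma_one, sub_self, Real.rpow_zero]
    ring_nf

lemma memℒp_id_exp {p : ℝ} (hp : 0 < p) : MemLp id (ENNReal.ofReal p) (expMeasure 1) := by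
  have hq0 : ENNReal.ofReal p ≠ 0 := by simp [hp, hp.not_ge]
  have hqt : ENNReal.ofReal p ≠ ⊤ := ENNReal.ofReal_ne_top
  rw [← memLp_norm_rpow_iff (q := ENNReal.ofReal p) aestronglyMeasurable_id hq0 hqt,
    ENNReal.toReal_ofReal hp.le, ENNReal.div_self hq0 hqt, memLp_one_iff_integrable]
  exact integrable_rpow_exp hp

/-- **Integral representation of `M_p`** (Lemma 3.2): for `k < p < k+1`,
`M_p(x₁,…,xₙ) = C_p⁻¹ ∫₀^∞ F_k(t²x₁, …, t²xₙ) t^{-p-1} dt`, where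
`M_p(x) = E[(∑ √(x_j) 𝓔_j)^p]`, `F_k(x) = E[Q_k(∑ √(x_j) 𝓔_j)]` and
`C_p = ∫₀^∞ Q_k(t) t^{-p-1} dt`. -/
theorem Mp_integral_representation
    {Ω : Type*} [MeasurableSpace Ω] (μ : Measure Ω) [IsProbabilityMeasure μ]
    (k : ℕ) (p : ℝ) (hk : (k : ℝ) < p) (hk' : p < k + 1) (n : ℕ) (hn : 1 ≤ n)
    (E : Fin n → Ω → ℝ) (hmeas : ∀ j, Measurable (E j))
    (hindep : iIndepFun E μ)
    (hlaw : ∀ j, Measure.map (E j) μ = expMeasure 1)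
    (x : Fin n → ℝ) (hx : ∀ j, 0 ≤ x j) :
    (∫ ω, (∑ j, Real.sqrt (x j) * E j ω) ^ p ∂μ)
      = (∫ t in Set.Ioi (0 : ℝ), Q k t * t ^ (-p - 1))⁻¹
        * ∫ t in Set.Ioi (0 : ℝ),
            (∫ ω, Q k (∑ j, Real.sqrt (t ^ 2 * x j) * E j ω) ∂μ) * t ^ (-p - 1) := by
  have hp0 : (0:ℝ) < p := lt_of_le_of_lt (Nat.cast_nonneg k) hk
  set C := ∫ t in Set.Ioi (0:ℝ), Q k t * t ^ (-p - 1) with hC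
  have hCpos : 0 < C := Cp_pos hk hk'
  set S : Ω → ℝ := fun ω => ∑ j, Real.sqrt (x j) * E j ω with hS
  have hSmeas : Measurable S := by
    apply Finset.measurable_sum
    exact fun j _ => (hmeas j).const_mul _
  have hEnn : ∀ᵐ ω ∂μ, ∀ j, 0 ≤ E j ω := by
    rw [MeasureTheory.ae_all_iff]
    intro j
    have h0 : μ (E j ⁻¹' (Set.Iio 0)) = 0 := by
      rw [← Measure.map_apply (hmeas j) measurableSet_Iio, hlaw j, expMeasure_Iio]
    rw [ae_iff]
    convert h0 using 2
    ext ω; simp [not_le]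
  have hSnn : ∀ᵐ ω ∂μ, 0 ≤ S ω := by
    filter_upwards [hEnn] with ω h
    exact Finset.sum_nonneg fun j _ => mul_nonneg (Real.sqrt_nonneg _) (h j)
  have hSlp : MemLp S (ENNReal.ofReal p) μ := by
    apply memLp_finset_sum
    intro j _
    have h1 : MemLp id (ENNReal.ofReal p) (Measure.map (E j) μ) := by
      rw [hlaw j]; exact memℒp_id_exp hp0
    have h2 := (memLp_map_measure_iff aestronglyMeasurable_id (hmeas j).aemeasurable).mp h1
    exact (h2.const_mul _ : MemLp (fun ω => Real.sqrt (x j) * (id ∘ E j) ω) _ μ)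
  have hSpInt : Integrable (fun ω => S ω ^ p) μ := by
    have h := hSlp.integrable_norm_rpow (by simp [hp0, hp0.not_ge]) ENNReal.ofReal_ne_top
    rw [ENNReal.toReal_ofReal hp0.le] at h
    refine h.congr ?_
    filter_upwards [hSnn] with ω hω
    rw [Real.norm_eq_abs, abs_of_nonneg hω]
  have hint_slice : ∀ s : ℝ, 0 ≤ s →
      IntegrableOn (fun t => Q k (t * s) * t ^ (-p - 1)) (Set.Ioi 0) := by
    intro s hs
    rcases hs.eq_or_lt with h | h
    · have heq : (fun t : ℝ => Q k (t * s) * t ^ (-p - 1)) = fun _ => (0:ℝ) := by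
        ext t; rw [← h, mul_zero, Q_zero, zero_mul]
      rw [heq]; exact integrableOn_zero
    · have h1 : IntegrableOn (fun t : ℝ => Q k (t * s) * (t * s) ^ (-p - 1)) (Set.Ioi 0) := by
        have := (integrableOn_Ioi_comp_mul_right_iff
          (fun u => Q k u * u ^ (-p - 1)) 0 h).mpr (by rw [zero_mul]; exact f_integrable hk hk')
        exact this
      have h2 := h1.const_mul (s ^ (p + 1))
      exact IntegrableOn.congr_fun h2 (fun t ht => (key_eq k p h ht).symm) measurableSet_Ioi
  have hslice_val : ∀ s : ℝ, 0 ≤ s →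
      ∫ t in Set.Ioi (0:ℝ), Q k (t * s) * t ^ (-p - 1) = C * s ^ p := by
    intro s hs
    rcases hs.eq_or_lt with h | h
    · simp [← h, Q_zero, Real.zero_rpow hp0.ne']
    · rw [scaling hk hk' h, ← hC]
  have hgmeas : AEStronglyMeasurable
      (Function.uncurry fun ω t => Q k (t * S ω) * t ^ (-p - 1))
      (μ.prod (volume.restrict (Set.Ioi 0))) := by
    apply Measurable.aestronglyMeasurable
    exact ((Q_continuous k).measurable.comp
      (measurable_snd.mul (hSmeas.comp measurable_fst))).mul (measurable_snd.pow_const _)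
  have hgint : Integrable (Function.uncurry fun ω t => Q k (t * S ω) * t ^ (-p - 1))
      (μ.prod (volume.restrict (Set.Ioi 0))) := by
    rw [integrable_prod_iff hgmeas]
    constructor
    · filter_upwards [hSnn] with ω hω
      exact hint_slice (S ω) hω
    · refine (hSpInt.const_mul C).congr ?_
      filter_upwards [hSnn] with ω hω
      have heq : (fun t => ‖Q k (t * S ω) * t ^ (-p - 1)‖)
          =ᵐ[volume.restrict (Set.Ioi 0)] fun t => Q k (t * S ω) * t ^ (-p - 1) := by
        rw [Filter.EventuallyEq, ae_restrict_iff' measurableSet_Ioi]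
        filter_upwards with t ht
        rw [Real.norm_eq_abs, abs_of_nonneg]
        exact mul_nonneg (Q_nonneg k _ (mul_nonneg ht.le hω)) (Real.rpow_nonneg ht.le _)
      simp only [Function.uncurry_apply_pair]
      rw [integral_congr_ae heq, hslice_val (S ω) hω]
  have hswap := integral_integral_swap hgint
  have hABmain : (∫ t in Set.Ioi (0:ℝ),
        (∫ ω, Q k (∑ j, Real.sqrt (t ^ 2 * x j) * E j ω) ∂μ) * t ^ (-p - 1))
      = ∫ t in Set.Ioi (0:ℝ), ∫ ω, Q k (t * S ω) * t ^ (-p - 1) ∂μ := by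
    refine setIntegral_congr_fun measurableSet_Ioi (fun t ht => ?_)
    have hsum : ∀ ω, (∑ j, Real.sqrt (t ^ 2 * x j) * E j ω) = t * S ω := by
      intro ω
      rw [hS]
      simp only
      rw [Finset.mul_sum]
      refine Finset.sum_congr rfl fun j _ => ?_
      rw [Real.sqrt_mul (sq_nonneg t), Real.sqrt_sq (le_of_lt ht)]
      ring
    simp_rw [hsum]
    rw [integral_mul_const]
  have hinner : (∫ ω, (∫ t in Set.Ioi (0:ℝ), Q k (t * S ω) * t ^ (-p - 1)) ∂μ)
      = C * ∫ ω, S ω ^ p ∂μ := by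
    rw [← integral_const_mul]
    refine integral_congr_ae ?_
    filter_upwards [hSnn] with ω hω
    rw [hslice_val (S ω) hω]
  have final : C⁻¹ * (∫ t in Set.Ioi (0:ℝ),
        (∫ ω, Q k (∑ j, Real.sqrt (t ^ 2 * x j) * E j ω) ∂μ) * t ^ (-p - 1))
      = ∫ ω, S ω ^ p ∂μ := by
    rw [hABmain, ← hswap, hinner, ← mul_assoc, inv_mul_cancel₀ (ne_of_gt hCpos), one_mul]
  exact final.symm
end

section
/- Let p > 4 and define f(x) = ((1 − x²)^{(p+1)/2} − x^{p+1}) / (√(1 − x²) − x) for 0 ≤ x < 1/√2, extended continuously at x = 1/√2. Then f'(0) = 1, f'(1/√2) = 0, and f''(1/√2) = (1/3)·2^{1−p/2}·p(p+1)(p−4) > 0; consequently f is not monotone on (0, 1/√2): it attains a local maximum at some interior point of (0, 1/√2). Here f(x) = Γ(p+1)^{−1}·E[(x·𝓔 + √(1−x²)·𝓔')^p] for 𝓔, 𝓔' i.i.d. standard exponential. -/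
open MeasureTheory ProbabilityTheory Real Set
open Filter Topology intervalIntegral
open scoped ENNReal NNReal

namespace Lem34

noncomputable def bb (x : ℝ) : ℝ := Real.sqrt (1 - x ^ 2)
noncomputable def mm (s x : ℝ) : ℝ := (1 - s) * x + s * bb x
noncomputable def gg (s x : ℝ) : ℝ := (1 - s) - s * x / bb x

lemma bb_nonneg (x : ℝ) : 0 ≤ bb x := Real.sqrt_nonneg _
lemma bb_le_one (x : ℝ) : bb x ≤ 1 := sqrt_le_one.mpr (by nlinarith [sq_nonneg x])
lemma bb_pos {x : ℝ} (hx : x ^ 2 < 1) : 0 < bb x := Real.sqrt_pos.mpr (by nlinarith)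
lemma bb_sq {x : ℝ} (hx : x ^ 2 ≤ 1) : bb x ^ 2 = 1 - x ^ 2 := Real.sq_sqrt (by nlinarith)

lemma hasDerivAt_bb {x : ℝ} (hx : x ^ 2 < 1) : HasDerivAt bb (-x / bb x) x := by
  have h1 : (1 : ℝ) - x ^ 2 ≠ 0 := by nlinarith
  have h0 : HasDerivAt (fun y : ℝ => 1 - y ^ 2) (-(2 * x ^ 1)) x := (hasDerivAt_pow 2 x).const_sub 1
  have h2 := h0.sqrt h1
  have hb := bb_pos hx
  refine h2.congr_deriv ?_
  rw [show Real.sqrt (1 - x ^ 2) = bb x from rfl]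
  field_simp

lemma hasDerivAt_mm {s x : ℝ} (hx : x ^ 2 < 1) :
    HasDerivAt (fun y => mm s y) (gg s x) x := by
  have h1 : HasDerivAt (fun y : ℝ => (1 - s) * y) ((1 - s) * 1) x := (hasDerivAt_id x).const_mul _
  have h2 := (hasDerivAt_bb hx).const_mul s
  have := h1.add h2
  refine this.congr_deriv ?_
  simp [gg]
  ring

lemma hasDerivAt_gg {s x : ℝ} (hx : x ^ 2 < 1) :
    HasDerivAt (fun y => gg s y) (-(s / bb x ^ 3)) x := by
  have hb := bb_pos hx
  have hbne : bb x ≠ 0 := ne_of_gt hb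
  have h1 : HasDerivAt (fun y : ℝ => y / bb y)
      ((1 * bb x - x * (-x / bb x)) / bb x ^ 2) x :=
    (hasDerivAt_id x).div (hasDerivAt_bb hx) hbne
  have h2 := (h1.const_mul s).const_sub (1 - s)
  have heq : (fun y : ℝ => (1 - s) - s * (y / bb y)) = fun y => gg s y := by
    funext y; simp [gg]; ring
  rw [heq] at h2
  have hb2 : bb x ^ 2 = 1 - x ^ 2 := bb_sq hx.le
  have key : (1 * bb x - x * (-x / bb x)) / bb x ^ 2 = 1 / bb x ^ 3 := by
    rw [div_eq_div_iff (by positivity) (by positivity)]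
    field_simp
    linear_combination hb2
  rw [key] at h2
  refine h2.congr_deriv ?_
  field_simp

end Lem34

namespace Lem34
noncomputable def G2 (p s x : ℝ) : ℝ :=
  -(s / bb x ^ 3) * p * mm s x ^ (p-1) +
    gg s x * p * (gg s x * (p - 1) * mm s x ^ (p - 1 - 1))

lemma zone_bb {x : ℝ} (h1 : 1/2 ≤ x) (h2 : x ≤ 5/6) : 1/2 ≤ bb x ∧ x ^ 2 < 1 := by
  have hx2 : x ^ 2 < 1 := by nlinarith
  have hb2 : bb x ^ 2 = 1 - x ^ 2 := bb_sq hx2.le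
  have hbn := bb_nonneg x
  exact ⟨by nlinarith, hx2⟩

lemma zone_mm {s x : ℝ} (h1 : 1/2 ≤ x) (h2 : x ≤ 5/6) (hs0 : 0 ≤ s) (hs1 : s ≤ 1) :
    1/2 ≤ mm s x ∧ mm s x ≤ 1 := by
  obtain ⟨hb, _⟩ := zone_bb h1 h2
  have hb1 := bb_le_one x
  constructor <;> [skip; skip] <;>
  · simp only [mm]
    nlinarith [mul_nonneg hs0 (sub_nonneg.mpr hb), mul_nonneg hs0 (sub_nonneg.mpr hb1),
      mul_nonneg (sub_nonneg.mpr hs1) (by linarith : (0:ℝ) ≤ x - 1/2),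
      mul_nonneg (sub_nonneg.mpr hs1) (by linarith : (0:ℝ) ≤ 1 - x)]

lemma zone_gg {s x : ℝ} (h1 : 1/2 ≤ x) (h2 : x ≤ 5/6) (hs0 : 0 ≤ s) (hs1 : s ≤ 1) :
    |gg s x| ≤ 3 := by
  obtain ⟨hb, _⟩ := zone_bb h1 h2
  have hd : 0 ≤ s * x / bb x := by positivity
  have hd2 : s * x / bb x ≤ 2 := by
    rw [div_le_iff₀ (by linarith)]
    nlinarith
  rw [abs_le]; constructor <;> simp only [gg] <;> nlinarith

lemma ball_zone {x₀ : ℝ} (hx₀ : x₀ ∈ Ioo (1/2 : ℝ) (5/6)) {x : ℝ}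
    (hx : x ∈ Metric.ball x₀ (min (x₀ - 1/2) (5/6 - x₀))) : 1/2 ≤ x ∧ x ≤ 5/6 := by
  rw [Metric.mem_ball, Real.dist_eq, abs_sub_lt_iff] at hx
  have h1 := min_le_left (x₀ - 1/2) (5/6 - x₀)
  have h2 := min_le_right (x₀ - 1/2) (5/6 - x₀)
  constructor <;> linarith [hx.1, hx.2]

lemma cont_mm (x : ℝ) : Continuous fun s => mm s x := by
  simp only [mm]; fun_prop

lemma cont_gg (x : ℝ) : Continuous fun s => gg s x := by
  simp only [gg]
  exact (continuous_const.sub continuous_id).sub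
    ((continuous_id.mul continuous_const).div_const _)

lemma hasDerivAt_FF {p : ℝ} (hp : 1 ≤ p) {x₀ : ℝ} (hx₀ : x₀ ∈ Ioo (1/2 : ℝ) (5/6)) :
    HasDerivAt (fun x => ∫ s in (0:ℝ)..1, mm s x ^ p)
      (∫ s in (0:ℝ)..1, gg s x₀ * p * mm s x₀ ^ (p-1)) x₀ := by
  have hp0 : (0:ℝ) ≤ p := by linarith
  have hε : 0 < min (x₀ - 1/2) (5/6 - x₀) := lt_min (by linarith [hx₀.1]) (by linarith [hx₀.2])
  refine (intervalIntegral.hasDerivAt_integral_of_dominated_loc_of_deriv_le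
    (F := fun x s => mm s x ^ p) (F' := fun x s => gg s x * p * mm s x ^ (p-1))
    (bound := fun _ => 3 * p) (Metric.ball_mem_nhds x₀ hε) ?_ ?_ ?_ ?_ ?_ ?_).2
  · filter_upwards with x
    exact (((cont_mm x).rpow_const fun _ => Or.inr hp0)).aestronglyMeasurable
  · exact ((cont_mm x₀).rpow_const fun _ => Or.inr hp0).intervalIntegrable 0 1
  · exact (((cont_gg x₀).mul continuous_const).mul
      ((cont_mm x₀).rpow_const fun _ => Or.inr (by linarith))).aestronglyMeasurable
  · filter_upwards with s hs x hx
    obtain ⟨h1, h2⟩ := ball_zone hx₀ hx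
    rw [uIoc_of_le zero_le_one] at hs
    have hs0 : 0 ≤ s := hs.1.le
    have hs1 : s ≤ 1 := hs.2
    obtain ⟨hm1, hm2⟩ := zone_mm h1 h2 hs0 hs1
    have hmp : mm s x ^ (p-1) ≤ 1 := Real.rpow_le_one (by linarith) hm2 (by linarith)
    have hmn : 0 ≤ mm s x ^ (p-1) := Real.rpow_nonneg (by linarith) _
    have hg := zone_gg h1 h2 hs0 hs1
    rw [norm_mul, norm_mul, Real.norm_eq_abs, Real.norm_eq_abs, Real.norm_eq_abs,
      abs_of_nonneg hp0, abs_of_nonneg hmn]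
    calc |gg s x| * p * mm s x ^ (p-1) ≤ 3 * p * 1 := by
          apply mul_le_mul _ hmp hmn (by positivity)
          exact mul_le_mul_of_nonneg_right hg hp0
      _ = 3 * p := by ring
  · exact intervalIntegrable_const
  · filter_upwards with s hs x hx
    obtain ⟨h1, h2⟩ := ball_zone hx₀ hx
    rw [uIoc_of_le zero_le_one] at hs
    obtain ⟨hm1, _⟩ := zone_mm h1 h2 hs.1.le hs.2
    have hx2 : x ^ 2 < 1 := (zone_bb h1 h2).2
    exact (hasDerivAt_mm hx2).rpow_const (Or.inl (by linarith))

lemma hasDerivAt_F1int {p : ℝ} (hp : 4 < p) {x₀ : ℝ} (hx₀ : x₀ ∈ Ioo (1/2 : ℝ) (5/6)) :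
    HasDerivAt (fun x => ∫ s in (0:ℝ)..1, gg s x * p * mm s x ^ (p-1))
      (∫ s in (0:ℝ)..1, G2 p s x₀) x₀ := by
  have hp0 : (0:ℝ) ≤ p := by linarith
  have hε : 0 < min (x₀ - 1/2) (5/6 - x₀) := lt_min (by linarith [hx₀.1]) (by linarith [hx₀.2])
  refine (intervalIntegral.hasDerivAt_integral_of_dominated_loc_of_deriv_le
    (F := fun x s => gg s x * p * mm s x ^ (p-1)) (F' := fun x s => G2 p s x)
    (bound := fun _ => 8 * p + 9 * p * (p-1)) (Metric.ball_mem_nhds x₀ hε) ?_ ?_ ?_ ?_ ?_ ?_).2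
  · filter_upwards with x
    exact (((cont_gg x).mul continuous_const).mul
      ((cont_mm x).rpow_const fun _ => Or.inr (by linarith))).aestronglyMeasurable
  · exact (((cont_gg x₀).mul continuous_const).mul
      ((cont_mm x₀).rpow_const fun _ => Or.inr (by linarith))).intervalIntegrable 0 1
  · apply Continuous.aestronglyMeasurable
    simp only [G2]
    apply Continuous.add
    · exact (((continuous_id.div_const _).neg.mul continuous_const).mul
        ((cont_mm x₀).rpow_const fun _ => Or.inr (by linarith)))
    · exact ((cont_gg x₀).mul continuous_const).mul
        (((cont_gg x₀).mul continuous_const).mul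
          ((cont_mm x₀).rpow_const fun _ => Or.inr (by linarith)))
  · filter_upwards with s hs x hx
    obtain ⟨h1, h2⟩ := ball_zone hx₀ hx
    rw [uIoc_of_le zero_le_one] at hs
    have hs0 : 0 ≤ s := hs.1.le
    have hs1 : s ≤ 1 := hs.2
    obtain ⟨hm1, hm2⟩ := zone_mm h1 h2 hs0 hs1
    obtain ⟨hb, _⟩ := zone_bb h1 h2
    have hmp1 : mm s x ^ (p-1) ≤ 1 := Real.rpow_le_one (by linarith) hm2 (by linarith)
    have hmn1 : 0 ≤ mm s x ^ (p-1) := Real.rpow_nonneg (by linarith) _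
    have hmp2 : mm s x ^ (p-1-1) ≤ 1 := Real.rpow_le_one (by linarith) hm2 (by linarith)
    have hmn2 : 0 ≤ mm s x ^ (p-1-1) := Real.rpow_nonneg (by linarith) _
    have hg := zone_gg h1 h2 hs0 hs1
    have hgn : 0 ≤ |gg s x| := abs_nonneg _
    have hdiv : s / bb x ^ 3 ≤ 8 := by
      rw [div_le_iff₀ (by positivity)]
      have h8 : (1/2:ℝ)^3 ≤ bb x ^ 3 := pow_le_pow_left₀ (by norm_num) hb 3
      nlinarith
    have hdivn : 0 ≤ s / bb x ^ 3 := by positivity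
    simp only [G2]
    calc ‖-(s / bb x ^ 3) * p * mm s x ^ (p-1) +
          gg s x * p * (gg s x * (p - 1) * mm s x ^ (p - 1 - 1))‖
        ≤ ‖-(s / bb x ^ 3) * p * mm s x ^ (p-1)‖ +
          ‖gg s x * p * (gg s x * (p - 1) * mm s x ^ (p - 1 - 1))‖ := norm_add_le _ _
      _ ≤ 8 * p + 9 * p * (p-1) := by
          apply add_le_add
          · rw [norm_mul, norm_mul, Real.norm_eq_abs, Real.norm_eq_abs, Real.norm_eq_abs,
              abs_neg, abs_of_nonneg hdivn, abs_of_nonneg hp0, abs_of_nonneg hmn1]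
            calc s / bb x ^ 3 * p * mm s x ^ (p-1) ≤ 8 * p * 1 := by
                  apply mul_le_mul _ hmp1 hmn1 (by positivity)
                  exact mul_le_mul_of_nonneg_right hdiv hp0
              _ = 8 * p := by ring
          · simp only [norm_mul, Real.norm_eq_abs]
            rw [abs_of_nonneg hp0, abs_of_nonneg (by linarith : (0:ℝ) ≤ p - 1),
              abs_of_nonneg hmn2]
            calc |gg s x| * p * (|gg s x| * (p-1) * mm s x ^ (p-1-1))
                ≤ 3 * p * (3 * (p-1) * 1) := by
                  apply mul_le_mul
                  · exact mul_le_mul_of_nonneg_right hg hp0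
                  · apply mul_le_mul _ hmp2 hmn2 (by nlinarith)
                    exact mul_le_mul_of_nonneg_right hg (by linarith)
                  · exact mul_nonneg (mul_nonneg hgn (by linarith)) hmn2
                  · positivity
              _ = 9 * p * (p-1) := by ring
  · exact intervalIntegrable_const
  · filter_upwards with s hs x hx
    obtain ⟨h1, h2⟩ := ball_zone hx₀ hx
    rw [uIoc_of_le zero_le_one] at hs
    obtain ⟨hm1, _⟩ := zone_mm h1 h2 hs.1.le hs.2
    have hx2 : x ^ 2 < 1 := (zone_bb h1 h2).2
    exact ((hasDerivAt_gg hx2).mul_const p).mul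
      ((hasDerivAt_mm hx2).rpow_const (Or.inl (by linarith)))

end Lem34

namespace Lem34

noncomputable def cc : ℝ := (Real.sqrt 2)⁻¹
noncomputable def FF (p x : ℝ) : ℝ := (p+1) * ∫ s in (0:ℝ)..1, mm s x ^ p
noncomputable def F1 (p x : ℝ) : ℝ := (p+1) * ∫ s in (0:ℝ)..1, gg s x * p * mm s x ^ (p-1)

lemma sqrt2_pos : 0 < Real.sqrt 2 := Real.sqrt_pos.mpr (by norm_num)
lemma cc_pos : 0 < cc := inv_pos.mpr sqrt2_pos
lemma cc_sq : cc ^ 2 = 1/2 := by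
  rw [cc, inv_pow, Real.sq_sqrt (by norm_num : (0:ℝ) ≤ 2)]
  norm_num

lemma cc_mem : cc ∈ Ioo (1/2 : ℝ) (5/6) := by
  have h := sqrt2_pos
  have hs : Real.sqrt 2 ^ 2 = 2 := Real.sq_sqrt (by norm_num)
  have h1 : Real.sqrt 2 < 2 := by nlinarith
  have h2 : (6/5 : ℝ) < Real.sqrt 2 := by nlinarith
  constructor
  · have := inv_strictAnti₀ h h1
    simpa [cc] using this.trans_le' (by norm_num)
  · have := inv_strictAnti₀ (by norm_num : (0:ℝ) < 6/5) h2
    calc cc < (6/5 : ℝ)⁻¹ := this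
      _ ≤ 5/6 := by norm_num

lemma bb_cc : bb cc = cc := by
  have : 1 - cc ^ 2 = 2⁻¹ := by rw [cc_sq]; norm_num
  rw [bb, this, Real.sqrt_inv, cc]

lemma mm_cc (s : ℝ) : mm s cc = cc := by simp [mm, bb_cc]; ring
lemma gg_cc (s : ℝ) : gg s cc = 1 - 2 * s := by
  have h := cc_pos.ne'
  rw [gg, bb_cc]
  field_simp
  ring

lemma poly_int (A B C : ℝ) : ∫ s in (0:ℝ)..1, (A + B*s + C*s^2) = A + B/2 + C/3 := by
  have i1 : IntervalIntegrable (fun _ : ℝ => A) volume 0 1 := intervalIntegrable_const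
  have i2 : IntervalIntegrable (fun s : ℝ => B*s) volume 0 1 :=
    (continuous_const.mul continuous_id).intervalIntegrable _ _
  have i3 : IntervalIntegrable (fun s : ℝ => C*s^2) volume 0 1 :=
    (continuous_const.mul (continuous_pow 2)).intervalIntegrable _ _
  rw [intervalIntegral.integral_add (i1.add i2) i3, intervalIntegral.integral_add i1 i2,
    intervalIntegral.integral_const, intervalIntegral.integral_const_mul,
    intervalIntegral.integral_const_mul, integral_id, integral_pow]
  norm_num
  ring

lemma F1_cc {p : ℝ} (hp : 4 < p) : F1 p cc = 0 := by
  rw [F1]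
  have : ∀ s : ℝ, gg s cc * p * mm s cc ^ (p-1)
      = (p * cc ^ (p-1)) + (-(2 * p * cc ^ (p-1))) * s + 0 * s^2 := by
    intro s; rw [gg_cc, mm_cc]; ring
  rw [intervalIntegral.integral_congr (fun s _ => this s), poly_int]
  ring

lemma cc_rpow (q : ℝ) : cc ^ q = (2:ℝ) ^ (-(1/2) * q) := by
  have hcc : cc = (2:ℝ) ^ (-(1/2) : ℝ) := by
    rw [cc, Real.sqrt_eq_rpow, ← Real.rpow_neg (by norm_num)]
  rw [hcc, ← Real.rpow_mul (by norm_num)]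

lemma cc_pow_eval {p : ℝ} :
    cc ^ (p-1-1) = (2:ℝ) ^ (1 - p/2) ∧ cc ^ (p-1) = 2 * (2:ℝ) ^ (1 - p/2) * cc ^ (3:ℕ) := by
  have h3 : (cc:ℝ) ^ (3:ℕ) = cc ^ ((3:ℕ):ℝ) := (Real.rpow_natCast cc 3).symm
  constructor
  · rw [cc_rpow]; congr 1; ring
  · rw [h3, cc_rpow, cc_rpow]
    push_cast
    rw [show (2:ℝ) * 2 ^ (1 - p/2) = 2 ^ (1:ℝ) * 2 ^ (1 - p/2) by rw [Real.rpow_one],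
      ← Real.rpow_add (by norm_num), ← Real.rpow_add (by norm_num)]
    congr 1; ring

lemma G2_cc_int {p : ℝ} (hp : 4 < p) :
    (p+1) * ∫ s in (0:ℝ)..1, G2 p s cc = (1/3) * 2 ^ (1 - p/2) * (p * (p+1) * (p-4)) := by
  obtain ⟨h1, h2⟩ := cc_pow_eval (p := p)
  set T := (2:ℝ) ^ (1 - p/2) with hT
  have hcne : (cc:ℝ) ≠ 0 := cc_pos.ne'
  have key : ∀ s : ℝ, G2 p s cc =
      (p*(p-1)*T) + (-(2*T)*p - 4*p*(p-1)*T) * s + (4*p*(p-1)*T) * s^2 := by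
    intro s
    rw [G2, mm_cc, gg_cc, bb_cc, h1, h2]
    field_simp
    ring
  rw [intervalIntegral.integral_congr (fun s _ => key s), poly_int]
  ring

end Lem34

namespace Lem34

lemma x_lt_bb {p : ℝ} {x : ℝ} (hx0 : 0 ≤ x) (hxc : x < cc) : x < bb x := by
  have hx2 : x ^ 2 < 1/2 := by
    have := cc_sq
    nlinarith [cc_pos]
  have hb2 : bb x ^ 2 = 1 - x ^ 2 := bb_sq (by nlinarith)
  nlinarith [bb_nonneg x]

lemma FF_eq {p : ℝ} (hp : 4 < p) {x : ℝ} (hx0 : 0 ≤ x) (hxc : x < cc) :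
    FF p x = ((1 - x ^ 2) ^ ((p + 1) / 2) - x ^ (p + 1)) / (Real.sqrt (1 - x ^ 2) - x) := by
  have hxb : x < bb x := x_lt_bb (p := p) hx0 hxc
  have hne : bb x - x ≠ 0 := by linarith
  have hp1 : (0:ℝ) < p + 1 := by linarith
  have hderiv : ∀ s ∈ uIcc (0:ℝ) 1,
      HasDerivAt (fun s => mm s x ^ (p+1) / ((p+1)*(bb x - x))) (mm s x ^ p) s := by
    intro s _
    have h1 : HasDerivAt (fun s : ℝ => mm s x) (bb x - x) s := by
      have ha : HasDerivAt (fun s : ℝ => (1 - s) * x) ((-1) * x) s :=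
        ((hasDerivAt_id s).const_sub 1).mul_const x
      have hb : HasDerivAt (fun s : ℝ => s * bb x) (1 * bb x) s :=
        (hasDerivAt_id s).mul_const (bb x)
      have := ha.add hb
      refine this.congr_deriv ?_
      ring
    have h2 := h1.rpow_const (Or.inr (by linarith : (1:ℝ) ≤ p + 1))
    have h3 := h2.div_const ((p+1)*(bb x - x))
    refine h3.congr_deriv ?_
    rw [show p + 1 - 1 = p by ring]
    field_simp
  have hint : IntervalIntegrable (fun s => mm s x ^ p) volume 0 1 :=
    ((cont_mm x).rpow_const fun _ => Or.inr (by linarith)).intervalIntegrable _ _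
  have hFTC := intervalIntegral.integral_eq_sub_of_hasDerivAt hderiv hint
  have hmm1 : mm 1 x = bb x := by simp [mm]
  have hmm0 : mm 0 x = x := by simp [mm]
  rw [hmm1, hmm0] at hFTC
  have hbrp : bb x ^ (p+1) = (1 - x ^ 2) ^ ((p + 1) / 2) := by
    have h2 : (0:ℝ) ≤ 1 - x ^ 2 := by nlinarith [bb_sq (show x^2 ≤ 1 by nlinarith [x_lt_bb (p:=p) hx0 hxc, bb_le_one x]), sq_nonneg x]
    rw [bb, Real.sqrt_eq_rpow, ← Real.rpow_mul h2]
    congr 1; ring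
  rw [FF, hFTC, ← hbrp]
  have : Real.sqrt (1 - x ^ 2) = bb x := rfl
  rw [this]
  field_simp

end Lem34

namespace Lem34

lemma hasDerivAt_FFp {p : ℝ} (hp : 4 < p) {x₀ : ℝ} (hx₀ : x₀ ∈ Ioo (1/2:ℝ) (5/6)) :
    HasDerivAt (FF p) (F1 p x₀) x₀ := by
  have h := (hasDerivAt_FF (by linarith : (1:ℝ) ≤ p) hx₀).const_mul (p+1)
  exact h

lemma hasDerivAt_F1p {p : ℝ} (hp : 4 < p) {x₀ : ℝ} (hx₀ : x₀ ∈ Ioo (1/2:ℝ) (5/6)) :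
    HasDerivAt (F1 p) ((p+1) * ∫ s in (0:ℝ)..1, G2 p s x₀) x₀ := by
  have h := (hasDerivAt_F1int hp hx₀).const_mul (p+1)
  exact h

section Glue
variable {p : ℝ} (hp : 4 < p) {f : ℝ → ℝ}
  (hf : ∀ x : ℝ, 0 ≤ x → x < cc →
    f x = ((1 - x ^ 2) ^ ((p + 1) / 2) - x ^ (p + 1)) / (Real.sqrt (1 - x ^ 2) - x))
  (hcont : ContinuousOn f (Icc 0 cc))

include hp hf in
lemma eqOn_Ico : ∀ x : ℝ, 0 ≤ x → x < cc → f x = FF p x :=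
  fun x h0 h1 => (hf x h0 h1).trans (FF_eq hp h0 h1).symm

include hp hf hcont in
lemma f_cc : f cc = FF p cc := by
  have hcder : HasDerivAt (FF p) (F1 p cc) cc := hasDerivAt_FFp hp cc_mem
  have hne : (𝓝[Ico 0 cc] cc).NeBot := by
    rw [← mem_closure_iff_nhdsWithin_neBot, closure_Ico cc_pos.ne]
    exact ⟨cc_pos.le, le_rfl⟩
  have t1 : Tendsto f (𝓝[Ico 0 cc] cc) (𝓝 (f cc)) :=
    (hcont cc ⟨cc_pos.le, le_rfl⟩).mono Ico_subset_Icc_self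
  have t2 : Tendsto f (𝓝[Ico 0 cc] cc) (𝓝 (FF p cc)) := by
    refine (hcder.continuousAt.continuousWithinAt).congr' ?_
    filter_upwards [self_mem_nhdsWithin] with x hx
    exact (eqOn_Ico hp hf x hx.1 hx.2).symm
  exact tendsto_nhds_unique t1 t2

include hp hf hcont in
lemma eqOn_Icc : EqOn f (FF p) (Icc 0 cc) := by
  intro x hx
  rcases hx.2.lt_or_eq with h | h
  · exact eqOn_Ico hp hf x hx.1 h
  · subst h; exact f_cc hp hf hcont

include hp hf in
lemma derivWithin_zero : derivWithin f (Icc 0 cc) 0 = 1 := by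
  set ND : ℝ → ℝ :=
    fun x => ((1 - x ^ 2) ^ ((p + 1) / 2) - x ^ (p + 1)) / (Real.sqrt (1 - x ^ 2) - x) with hND
  have hev : f =ᶠ[𝓝[Icc 0 cc] 0] ND := by
    filter_upwards [inter_mem self_mem_nhdsWithin
      (mem_nhdsWithin_of_mem_nhds (Iio_mem_nhds cc_pos))] with x hx
    exact hf x hx.1.1 hx.2
  rw [Filter.EventuallyEq.derivWithin_eq hev (hf 0 le_rfl cc_pos)]
  have hN1 : HasDerivAt (fun x : ℝ => (1 - x ^ 2) ^ ((p + 1) / 2))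
      (-(2 * (0:ℝ) ^ 1) * ((p+1)/2) * (1 - (0:ℝ) ^ 2) ^ ((p+1)/2 - 1)) 0 :=
    ((hasDerivAt_pow 2 0).const_sub 1).rpow_const (Or.inl (by norm_num))
  have hN2 : HasDerivAt (fun x : ℝ => x ^ (p + 1)) ((p+1) * (0:ℝ) ^ (p + 1 - 1)) 0 :=
    Real.hasDerivAt_rpow_const (Or.inr (by linarith))
  have hD : HasDerivAt (fun x : ℝ => Real.sqrt (1 - x ^ 2) - x)
      ((-(2 * (0:ℝ) ^ 1)) / (2 * Real.sqrt (1 - (0:ℝ) ^ 2)) - 1) 0 :=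
    (((hasDerivAt_pow 2 0).const_sub 1).sqrt (by norm_num)).sub (hasDerivAt_id 0)
  have hDne : Real.sqrt (1 - (0:ℝ) ^ 2) - (0:ℝ) ≠ 0 := by
    norm_num
  have hdiv := (hN1.sub hN2).div hD hDne
  have hfinal : HasDerivAt ND 1 0 := by
    refine hdiv.congr_deriv ?_
    have hz : (0:ℝ) ^ (p + 1 - 1) = 0 := by
      rw [show p + 1 - 1 = p by ring, Real.zero_rpow (by linarith : p ≠ 0)]
    norm_num [hz, Real.zero_rpow (show p ≠ 0 by linarith),
      Real.zero_rpow (show p + 1 ≠ 0 by linarith)]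
  exact (hfinal.hasDerivWithinAt).derivWithin ((uniqueDiffOn_Icc cc_pos) 0 ⟨le_rfl, cc_pos.le⟩)

include hp hf hcont in
lemma derivWithin_cc : derivWithin f (Icc 0 cc) cc = F1 p cc := by
  rw [derivWithin_congr (eqOn_Icc hp hf hcont) (f_cc hp hf hcont)]
  exact ((hasDerivAt_FFp hp cc_mem).hasDerivWithinAt).derivWithin
    ((uniqueDiffOn_Icc cc_pos) cc ⟨cc_pos.le, le_rfl⟩)

include hp hf hcont in
lemma derivWithin_eq_F1 : ∀ y ∈ Icc 0 cc ∩ Ioi (1/2 : ℝ),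
    derivWithin f (Icc 0 cc) y = F1 p y := by
  intro y ⟨hy1, hy2⟩
  rw [derivWithin_congr (eqOn_Icc hp hf hcont) (eqOn_Icc hp hf hcont hy1)]
  have hy5 : y < 5/6 := lt_of_le_of_lt hy1.2 cc_mem.2
  exact ((hasDerivAt_FFp hp ⟨hy2, hy5⟩).hasDerivWithinAt).derivWithin
    ((uniqueDiffOn_Icc cc_pos) y hy1)

include hp hf hcont in
lemma derivWithin2_cc :
    derivWithin (fun y => derivWithin f (Icc 0 cc) y) (Icc 0 cc) cc
      = (1/3) * 2 ^ (1 - p/2) * (p * (p+1) * (p-4)) := by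
  have hev2 : (fun y => derivWithin f (Icc 0 cc) y) =ᶠ[𝓝[Icc 0 cc] cc] F1 p := by
    filter_upwards [inter_mem self_mem_nhdsWithin
      (mem_nhdsWithin_of_mem_nhds (Ioi_mem_nhds cc_mem.1))] with y hy
    exact derivWithin_eq_F1 hp hf hcont y hy
  rw [Filter.EventuallyEq.derivWithin_eq hev2 (derivWithin_cc hp hf hcont)]
  rw [((hasDerivAt_F1p hp cc_mem).hasDerivWithinAt).derivWithin
    ((uniqueDiffOn_Icc cc_pos) cc ⟨cc_pos.le, le_rfl⟩)]
  exact G2_cc_int hp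

end Glue

lemma target_pos {p : ℝ} (hp : 4 < p) :
    0 < (1/3) * (2:ℝ) ^ (1 - p/2) * (p * (p+1) * (p-4)) := by
  have h := Real.rpow_pos_of_pos (by norm_num : (0:ℝ) < 2) (1 - p/2)
  apply mul_pos (mul_pos (by norm_num) h)
  have h1 : 0 < p := by linarith
  have h2 : 0 < p + 1 := by linarith
  have h3 : 0 < p - 4 := by linarith
  positivity

end Lem34

namespace Lem34
section Glue2
variable {p : ℝ} (hp : 4 < p) {f : ℝ → ℝ}
  (hf : ∀ x : ℝ, 0 ≤ x → x < cc →
    f x = ((1 - x ^ 2) ^ ((p + 1) / 2) - x ^ (p + 1)) / (Real.sqrt (1 - x ^ 2) - x))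
  (hcont : ContinuousOn f (Icc 0 cc))

include hp hf hcont in
lemma exists_x0 : ∃ x₀, x₀ ∈ Ioo (1/2 : ℝ) cc ∧ F1 p x₀ < 0 ∧ HasDerivAt f (F1 p x₀) x₀ := by
  have hder := hasDerivAt_F1p hp cc_mem
  have hVpos : 0 < (p+1) * ∫ s in (0:ℝ)..1, G2 p s cc := by
    rw [G2_cc_int hp]; exact target_pos hp
  rw [hasDerivAt_iff_tendsto_slope] at hder
  have hder' : Tendsto (slope (F1 p) cc) (𝓝[Iio cc] cc)
      (𝓝 ((p+1) * ∫ s in (0:ℝ)..1, G2 p s cc)) :=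
    hder.mono_left (nhdsWithin_mono _ (fun x hx => ne_of_lt hx))
  have h1 : ∀ᶠ x in 𝓝[Iio cc] cc, 0 < slope (F1 p) cc x :=
    hder'.eventually (eventually_gt_nhds hVpos)
  have h2 : ∀ᶠ x in 𝓝[Iio cc] cc, 1/2 < x :=
    (eventually_gt_nhds cc_mem.1).filter_mono nhdsWithin_le_nhds
  have h3 : ∀ᶠ x in 𝓝[Iio cc] cc, x < cc :=
    eventually_mem_nhdsWithin.mono (fun x hx => hx)
  obtain ⟨x₀, hs, hhalf, hlt⟩ := (h1.and (h2.and h3)).exists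
  obtain ⟨hhalf, hlt⟩ := (⟨hhalf, hlt⟩ : _ ∧ _)
  rw [slope_def_field, F1_cc hp, sub_zero] at hs
  have hneg : F1 p x₀ < 0 := by
    rcases div_pos_iff.mp hs with ⟨_, h⟩ | ⟨h, _⟩
    · linarith
    · exact h
  refine ⟨x₀, ⟨hhalf, hlt⟩, hneg, ?_⟩
  have hx₀cc : x₀ ∈ Ioo (0:ℝ) cc := ⟨by linarith, hlt⟩
  have hFd : HasDerivAt (FF p) (F1 p x₀) x₀ :=
    hasDerivAt_FFp hp ⟨hhalf, lt_trans hlt cc_mem.2⟩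
  apply hFd.congr_of_eventuallyEq
  filter_upwards [Icc_mem_nhds hx₀cc.1 hx₀cc.2] with y hy
  exact eqOn_Icc hp hf hcont hy

include hp hf hcont in
lemma not_mono : ¬ MonotoneOn f (Ioo 0 cc) := by
  obtain ⟨x₀, hx₀, hneg, hder⟩ := exists_x0 hp hf hcont
  rw [hasDerivAt_iff_tendsto_slope] at hder
  have hder' : Tendsto (slope f x₀) (𝓝[Ioi x₀] x₀) (𝓝 (F1 p x₀)) :=
    hder.mono_left (nhdsWithin_mono _ (fun x hx => ne_of_gt hx))
  have h1 : ∀ᶠ x in 𝓝[Ioi x₀] x₀, slope f x₀ x < 0 :=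
    hder'.eventually (eventually_lt_nhds hneg)
  have h2 : ∀ᶠ x in 𝓝[Ioi x₀] x₀, x < cc :=
    (eventually_lt_nhds hx₀.2).filter_mono nhdsWithin_le_nhds
  have h3 : ∀ᶠ x in 𝓝[Ioi x₀] x₀, x₀ < x :=
    eventually_mem_nhdsWithin.mono (fun x hx => hx)
  obtain ⟨v, hs, hvc, hxv⟩ := (h1.and (h2.and h3)).exists
  obtain ⟨hvc, hxv⟩ := (⟨hvc, hxv⟩ : _ ∧ _)
  rw [slope_def_field] at hs
  have hfv : f v < f x₀ := by
    rcases div_neg_iff.mp hs with ⟨_, h⟩ | ⟨h, _⟩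
    · linarith
    · linarith
  intro hmono
  have := hmono (⟨by linarith [hx₀.1], hx₀.2⟩ : x₀ ∈ Ioo (0:ℝ) cc)
    (⟨by linarith [hx₀.1], hvc⟩ : v ∈ Ioo (0:ℝ) cc) hxv.le
  linarith

include hp hf in
lemma hasDerivAt_ND : HasDerivAt
    (fun x : ℝ => ((1 - x ^ 2) ^ ((p + 1) / 2) - x ^ (p + 1)) / (Real.sqrt (1 - x ^ 2) - x)) 1 0 := by
  have hN1 : HasDerivAt (fun x : ℝ => (1 - x ^ 2) ^ ((p + 1) / 2))
      (-(2 * (0:ℝ) ^ 1) * ((p+1)/2) * (1 - (0:ℝ) ^ 2) ^ ((p+1)/2 - 1)) 0 :=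
    ((hasDerivAt_pow 2 0).const_sub 1).rpow_const (Or.inl (by norm_num))
  have hN2 : HasDerivAt (fun x : ℝ => x ^ (p + 1)) ((p+1) * (0:ℝ) ^ (p + 1 - 1)) 0 :=
    Real.hasDerivAt_rpow_const (Or.inr (by linarith))
  have hD : HasDerivAt (fun x : ℝ => Real.sqrt (1 - x ^ 2) - x)
      ((-(2 * (0:ℝ) ^ 1)) / (2 * Real.sqrt (1 - (0:ℝ) ^ 2)) - 1) 0 :=
    (((hasDerivAt_pow 2 0).const_sub 1).sqrt (by norm_num)).sub (hasDerivAt_id 0)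
  have hDne : Real.sqrt (1 - (0:ℝ) ^ 2) - (0:ℝ) ≠ 0 := by norm_num
  have hdiv := (hN1.sub hN2).div hD hDne
  refine hdiv.congr_deriv ?_
  have hz : (0:ℝ) ^ (p + 1 - 1) = 0 := by
    rw [show p + 1 - 1 = p by ring, Real.zero_rpow (by linarith : p ≠ 0)]
  norm_num [hz, Real.zero_rpow (show p ≠ 0 by linarith),
    Real.zero_rpow (show p + 1 ≠ 0 by linarith)]

include hp hf hcont in
lemma exists_incr {u : ℝ} (hu0 : 0 < u) (huc : u ≤ cc) : ∃ α, α ∈ Ioo (0:ℝ) u ∧ f 0 < f α := by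
  have hder := hasDerivAt_ND hp hf
  rw [hasDerivAt_iff_tendsto_slope] at hder
  haveI hNB : (𝓝[Ioo (0:ℝ) u] (0:ℝ)).NeBot := by
    rw [← mem_closure_iff_nhdsWithin_neBot, closure_Ioo hu0.ne]
    exact ⟨le_rfl, hu0.le⟩
  have hder' : Tendsto (slope (fun x : ℝ =>
      ((1 - x ^ 2) ^ ((p + 1) / 2) - x ^ (p + 1)) / (Real.sqrt (1 - x ^ 2) - x)) 0)
      (𝓝[Ioo (0:ℝ) u] 0) (𝓝 1) :=
    hder.mono_left (nhdsWithin_mono _ (fun x hx => ne_of_gt hx.1))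
  have h1 := hder'.eventually (eventually_gt_nhds (by norm_num : (0:ℝ) < 1))
  have h3 : ∀ᶠ x in 𝓝[Ioo (0:ℝ) u] (0:ℝ), x ∈ Ioo (0:ℝ) u :=
    eventually_mem_nhdsWithin
  obtain ⟨α, hs, hmem⟩ := (h1.and h3).exists
  refine ⟨α, hmem, ?_⟩
  have hαc : α < cc := lt_of_lt_of_le hmem.2 huc
  rw [slope_def_field, ← hf α hmem.1.le hαc, ← hf 0 le_rfl cc_pos, sub_zero] at hs
  rcases div_pos_iff.mp hs with ⟨h, _⟩ | ⟨_, h⟩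
  · linarith
  · linarith [hmem.1]

include hp hf hcont in
lemma not_anti : ¬ AntitoneOn f (Ioo 0 cc) := by
  obtain ⟨α, hα, hfα⟩ := exists_incr hp hf hcont cc_pos le_rfl
  haveI hNB : (𝓝[Ioo (0:ℝ) α] (0:ℝ)).NeBot := by
    rw [← mem_closure_iff_nhdsWithin_neBot, closure_Ioo hα.1.ne]
    exact ⟨le_rfl, hα.1.le⟩
  have ht : Tendsto f (𝓝[Ioo (0:ℝ) α] 0) (𝓝 (f 0)) :=
    (hcont 0 ⟨le_rfl, cc_pos.le⟩).mono
      (fun x hx => ⟨hx.1.le, le_trans hx.2.le hα.2.le⟩)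
  have h1 : ∀ᶠ y in 𝓝[Ioo (0:ℝ) α] (0:ℝ), f y < f α :=
    ht.eventually (eventually_lt_nhds hfα)
  obtain ⟨y, hy1, hy2⟩ := (h1.and eventually_mem_nhdsWithin).exists
  intro hanti
  have := hanti (⟨hy2.1, lt_trans hy2.2 hα.2⟩ : y ∈ Ioo (0:ℝ) cc) hα hy2.2.le
  linarith

include hp hf hcont in
lemma local_max : ∃ x ∈ Ioo (0:ℝ) cc, IsLocalMax f x := by
  obtain ⟨x₀, hx₀, hneg, hder⟩ := exists_x0 hp hf hcont
  have hx₀0 : (0:ℝ) < x₀ := by linarith [hx₀.1]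
  -- a point β < x₀ with f x₀ < f β
  rw [hasDerivAt_iff_tendsto_slope] at hder
  have hder' : Tendsto (slope f x₀) (𝓝[Ioo 0 x₀] x₀) (𝓝 (F1 p x₀)) :=
    hder.mono_left (nhdsWithin_mono _ (fun x hx => ne_of_lt hx.2))
  haveI hNB : (𝓝[Ioo (0:ℝ) x₀] x₀).NeBot := by
    rw [← mem_closure_iff_nhdsWithin_neBot, closure_Ioo hx₀0.ne]
    exact ⟨hx₀0.le, le_rfl⟩
  have h1 : ∀ᶠ x in 𝓝[Ioo 0 x₀] x₀, slope f x₀ x < 0 :=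
    hder'.eventually (eventually_lt_nhds hneg)
  obtain ⟨β, hsβ, hβ⟩ := (h1.and eventually_mem_nhdsWithin).exists
  rw [slope_def_field] at hsβ
  have hfβ : f x₀ < f β := by
    rcases div_neg_iff.mp hsβ with ⟨_, h⟩ | ⟨h, _⟩
    · linarith
    · linarith [hβ.2]
  -- a point α with f 0 < f α
  obtain ⟨α, hα, hfα⟩ := exists_incr hp hf hcont hx₀0 hx₀.2.le
  -- max on Icc 0 x₀
  have hcont' : ContinuousOn f (Icc 0 x₀) :=
    hcont.mono (Icc_subset_Icc le_rfl hx₀.2.le)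
  obtain ⟨ξ, hξmem, hξmax⟩ := isCompact_Icc.exists_isMaxOn
    (Set.nonempty_of_mem (left_mem_Icc.mpr hx₀0.le)) hcont'
  have hξ0 : ξ ≠ 0 := by
    intro h
    have h1 := hξmax (show α ∈ Icc (0:ℝ) x₀ from ⟨hα.1.le, hα.2.le⟩)
    rw [h] at h1
    simp only [mem_setOf_eq] at h1
    linarith
  have hξx₀ : ξ ≠ x₀ := by
    intro h
    have h1 := hξmax (show β ∈ Icc (0:ℝ) x₀ from ⟨hβ.1.le, hβ.2.le⟩)
    rw [h] at h1
    simp only [mem_setOf_eq] at h1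
    linarith
  have hξI : ξ ∈ Ioo (0:ℝ) x₀ :=
    ⟨lt_of_le_of_ne hξmem.1 (Ne.symm hξ0), lt_of_le_of_ne hξmem.2 hξx₀⟩
  exact ⟨ξ, ⟨hξI.1, lt_trans hξI.2 hx₀.2⟩,
    hξmax.isLocalMax (Icc_mem_nhds hξI.1 hξI.2)⟩

end Glue2
end Lem34

namespace Lem34

noncomputable instance : IsProbabilityMeasure (expMeasure 1) :=
  isProbabilityMeasure_expMeasure one_pos

noncomputable def ee (x : ℝ) : ℝ := if 0 ≤ x then Real.exp (-x) else 0

lemma ee_nonneg (x : ℝ) : 0 ≤ ee x := by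
  rw [ee]; split_ifs; exacts [Real.exp_nonneg _, le_rfl]

lemma ee_meas : Measurable ee :=
  Measurable.ite measurableSet_Ici (Real.measurable_exp.comp measurable_neg) measurable_const

lemma expMeasure_one_eq :
    expMeasure 1 = volume.withDensity (fun x => ((ee x).toNNReal : ℝ≥0∞)) := by
  have h : ∀ x, exponentialPDF 1 x = ((ee x).toNNReal : ℝ≥0∞) := by
    intro x
    have h1 : exponentialPDF 1 x = ENNReal.ofReal (ee x) := by
      rw [exponentialPDF_eq, ee]
      norm_num
    rw [h1]
    rfl
  show gammaMeasure 1 1 = _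
  rw [gammaMeasure]
  congr 1
  funext x
  exact h x


lemma ae_ne_zero : ∀ᵐ x : ℝ, x ≠ (0:ℝ) := by
  rw [ae_iff]
  have h : {x : ℝ | ¬ x ≠ 0} = {0} := by ext; simp
  rw [h]
  exact measure_singleton 0

lemma integral_nu (g : ℝ → ℝ) :
    ∫ x, g x ∂(expMeasure 1) = ∫ x in Ioi (0:ℝ), g x * Real.exp (-x) := by
  rw [expMeasure_one_eq, integral_withDensity_eq_integral_smul (ee_meas.real_toNNReal) g]
  have hae : (fun x => (ee x).toNNReal • g x)
      =ᵐ[volume] (Ioi (0:ℝ)).indicator (fun x => g x * Real.exp (-x)) := by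
    filter_upwards [ae_ne_zero] with x hx
    rcases lt_or_gt_of_ne hx with h | h
    · rw [indicator_of_notMem (show x ∉ Ioi (0:ℝ) by simp [not_lt.mpr h.le])]
      rw [ee, if_neg (not_le.mpr h)]
      simp
    · rw [indicator_of_mem (mem_Ioi.mpr h), ee, if_pos h.le]
      rw [NNReal.smul_def, Real.coe_toNNReal _ (Real.exp_nonneg _), smul_eq_mul]
      ring
  rw [integral_congr_ae hae, MeasureTheory.integral_indicator measurableSet_Ioi]



lemma integrable_nu {g : ℝ → ℝ} (hg : AEStronglyMeasurable g (expMeasure 1))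
    (hInt : IntegrableOn (fun x => g x * Real.exp (-x)) (Ioi 0)) :
    Integrable g (expMeasure 1) := by
  rw [expMeasure_one_eq] at hg ⊢
  rw [integrable_withDensity_iff (ee_meas.real_toNNReal.coe_nnreal_ennreal)
    (Eventually.of_forall fun x => ENNReal.coe_lt_top)]
  have hae : (fun x => g x * ((((ee x).toNNReal : ℝ≥0∞)).toReal))
      =ᵐ[volume] (Ioi (0:ℝ)).indicator (fun x => g x * Real.exp (-x)) := by
    filter_upwards [ae_ne_zero] with x hx
    rcases lt_or_gt_of_ne hx with h | h
    · rw [indicator_of_notMem (show x ∉ Ioi (0:ℝ) by simp [not_lt.mpr h.le])]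
      rw [ENNReal.coe_toReal, Real.coe_toNNReal _ (ee_nonneg x), ee, if_neg (not_le.mpr h)]
      simp
    · rw [indicator_of_mem (mem_Ioi.mpr h)]
      rw [ENNReal.coe_toReal, Real.coe_toNNReal _ (ee_nonneg x), ee, if_pos h.le]
  rw [integrable_congr hae]
  rw [integrable_indicator_iff measurableSet_Ioi]
  exact hInt

lemma nu_ae_nonneg : ∀ᵐ x ∂(expMeasure 1), 0 ≤ x := by
  rw [ae_iff]
  have h : {x : ℝ | ¬ 0 ≤ x} = Iio 0 := by ext; simp
  rw [h, expMeasure_one_eq, withDensity_apply _ measurableSet_Iio]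
  have : ∀ᵐ x ∂(volume.restrict (Iio (0:ℝ))), ((ee x).toNNReal : ℝ≥0∞) = 0 := by
    rw [ae_restrict_iff' measurableSet_Iio]
    filter_upwards with x hx
    rw [ee, if_neg (not_le.mpr hx)]
    simp
  rw [lintegral_congr_ae this, lintegral_zero]

lemma moment_nu {q : ℝ} (hq : 0 < q) :
    ∫ x, x ^ q ∂(expMeasure 1) = Real.Gamma (q+1) := by
  rw [integral_nu, Real.Gamma_eq_integral (by linarith : (0:ℝ) < q + 1)]
  refine setIntegral_congr_fun measurableSet_Ioi (fun x hx => ?_)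
  rw [show q + 1 - 1 = q by ring]
  ring

lemma integrable_rpow_nu {q : ℝ} (hq : 0 < q) :
    Integrable (fun x : ℝ => x ^ q) (expMeasure 1) := by
  refine integrable_nu ((Real.continuous_rpow_const hq.le).aestronglyMeasurable) ?_
  refine (Real.GammaIntegral_convergent (by linarith : (0:ℝ) < q + 1)).congr_fun
    (fun x hx => ?_) measurableSet_Ioi
  rw [show q + 1 - 1 = q by ring]
  ring

lemma one_add_rpow_le {y q : ℝ} (hy : 0 ≤ y) (hq : 0 ≤ q) :
    (1 + y) ^ q ≤ 2 ^ q * (1 + y ^ q) := by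
  rcases le_total y 1 with h | h
  · calc (1 + y) ^ q ≤ 2 ^ q := Real.rpow_le_rpow (by linarith) (by linarith) hq
      _ ≤ 2 ^ q * (1 + y ^ q) := by
          nlinarith [Real.rpow_nonneg hy q, Real.rpow_nonneg (by norm_num : (0:ℝ) ≤ 2) q]
  · calc (1 + y) ^ q ≤ (2 * y) ^ q := Real.rpow_le_rpow (by linarith) (by linarith) hq
      _ = 2 ^ q * y ^ q := Real.mul_rpow (by norm_num) hy
      _ ≤ 2 ^ q * (1 + y ^ q) := by
          nlinarith [Real.rpow_nonneg hy q, Real.rpow_nonneg (by norm_num : (0:ℝ) ≤ 2) q]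

lemma integrableOn_poly_exp {a C q : ℝ} (ha : 0 ≤ a) (hC : 0 ≤ C) (hq : 0 ≤ q) :
    IntegrableOn (fun y => (C + a*y) ^ q * Real.exp (-y)) (Ioi (0:ℝ)) := by
  have hmeas : AEStronglyMeasurable (fun y => (C + a*y) ^ q * Real.exp (-y))
      (volume.restrict (Ioi (0:ℝ))) := by
    apply Continuous.aestronglyMeasurable
    exact (((continuous_const.add (continuous_const.mul continuous_id)).rpow_const
      (fun _ => Or.inr hq)).mul (Real.continuous_exp.comp continuous_neg))
  have hg1 : IntegrableOn (fun y : ℝ => Real.exp (-y)) (Ioi 0) := by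
    have := exp_neg_integrableOn_Ioi (0:ℝ) (one_pos)
    refine this.congr_fun (fun x _ => ?_) measurableSet_Ioi
    norm_num
  have hg2 : IntegrableOn (fun y : ℝ => y ^ q * Real.exp (-y)) (Ioi 0) := by
    refine (Real.GammaIntegral_convergent (by linarith : (0:ℝ) < q + 1)).congr_fun
      (fun x hx => ?_) measurableSet_Ioi
    rw [show q + 1 - 1 = q by ring]
    ring
  have hgint : IntegrableOn
      (fun y : ℝ => (C+a) ^ q * (2 ^ q * (Real.exp (-y) + y ^ q * Real.exp (-y)))) (Ioi 0) :=
    ((hg1.add hg2).const_mul (2 ^ q)).const_mul ((C+a) ^ q)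
  refine Integrable.mono' hgint hmeas ?_
  rw [ae_restrict_iff' measurableSet_Ioi]
  filter_upwards with y hy
  rw [mem_Ioi] at hy
  have hbase : (0:ℝ) ≤ C + a * y := by nlinarith
  have h1 : C + a * y ≤ (C + a) * (1 + y) := by nlinarith
  have h2 : (C + a*y) ^ q ≤ (C+a) ^ q * (1+y) ^ q := by
    rw [← Real.mul_rpow (by nlinarith) (by nlinarith)]
    exact Real.rpow_le_rpow hbase h1 hq
  have h3 : (1+y) ^ q ≤ 2 ^ q * (1 + y ^ q) := one_add_rpow_le hy.le hq
  have hexp : (0:ℝ) < Real.exp (-y) := Real.exp_pos _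
  have hCa : (0:ℝ) ≤ (C+a) ^ q := Real.rpow_nonneg (by nlinarith) q
  rw [Real.norm_eq_abs, abs_of_nonneg (mul_nonneg (Real.rpow_nonneg hbase q) hexp.le)]
  calc (C + a*y) ^ q * Real.exp (-y) ≤ ((C+a) ^ q * (2 ^ q * (1 + y ^ q))) * Real.exp (-y) := by
        apply mul_le_mul_of_nonneg_right _ hexp.le
        calc (C + a*y) ^ q ≤ (C+a) ^ q * (1+y) ^ q := h2
          _ ≤ (C+a) ^ q * (2 ^ q * (1 + y ^ q)) := mul_le_mul_of_nonneg_left h3 hCa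
    _ = (C+a) ^ q * (2 ^ q * (Real.exp (-y) + y ^ q * Real.exp (-y))) := by ring

end Lem34

namespace Lem34

lemma ibp {a C q : ℝ} (ha : 0 < a) (hC : 0 ≤ C) (hq : 1 ≤ q) :
    ∫ y in Ioi (0:ℝ), (C + a*y) ^ q * Real.exp (-y)
      = C ^ q + a * q * ∫ y in Ioi (0:ℝ), (C + a*y) ^ (q-1) * Real.exp (-y) := by
  set φ : ℝ → ℝ := fun y => -((C + a*y) ^ q * Real.exp (-y)) with hφ
  set ψ : ℝ → ℝ := fun y =>
    (C + a*y) ^ q * Real.exp (-y) - a*q*((C + a*y) ^ (q-1) * Real.exp (-y)) with hψ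
  have hderiv : ∀ y : ℝ, HasDerivAt φ (ψ y) y := by
    intro y
    have h1 : HasDerivAt (fun y : ℝ => C + a*y) (a * 1) y :=
      ((hasDerivAt_id y).const_mul a).const_add C
    have h2 := h1.rpow_const (Or.inr hq)
    have h3 : HasDerivAt (fun y : ℝ => Real.exp (-y)) (Real.exp (-y) * (-1)) y :=
      (hasDerivAt_neg y).exp
    have h4 := (h2.mul h3).neg
    refine h4.congr_deriv ?_
    simp only [hψ]
    ring
  have htend : Tendsto φ atTop (𝓝 0) := by
    have h0 : Tendsto (fun u : ℝ => u ^ q * Real.exp (-(1/a) * u)) atTop (𝓝 0) :=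
      tendsto_rpow_mul_exp_neg_mul_atTop_nhds_zero q (1/a) (by positivity)
    have hu : Tendsto (fun y : ℝ => C + a*y) atTop atTop :=
      tendsto_atTop_add_const_left _ C (tendsto_id.const_mul_atTop ha)
    have h1 := ((h0.comp hu).mul_const (Real.exp (C/a))).neg
    have heq : ∀ y : ℝ, -(((C + a*y) ^ q * Real.exp (-(1/a) * (C + a*y))) * Real.exp (C/a))
        = φ y := by
      intro y
      simp only [hφ]
      rw [mul_assoc, ← Real.exp_add]
      congr 3
      field_simp
      ring
    have h2 : Tendsto φ atTop (𝓝 (-(0 * Real.exp (C/a)))) := by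
      refine Tendsto.congr (fun y => heq y) h1
    simpa using h2
  have hψint : IntegrableOn ψ (Ioi (0:ℝ)) := by
    have i1 := integrableOn_poly_exp ha.le hC (by linarith : (0:ℝ) ≤ q)
    have i2 := (integrableOn_poly_exp ha.le hC (by linarith : (0:ℝ) ≤ q - 1)).const_mul (a*q)
    exact i1.sub i2
  have hcont0 : ContinuousWithinAt φ (Ici (0:ℝ)) 0 :=
    ((hderiv 0).continuousAt).continuousWithinAt
  have hkey := integral_Ioi_of_hasDerivAt_of_tendsto hcont0
    (fun x _ => hderiv x) hψint htend
  have hφ0 : φ 0 = -(C ^ q) := by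
    simp only [hφ]
    norm_num
  rw [hφ0] at hkey
  have hsplit : ∫ y in Ioi (0:ℝ), ψ y
      = (∫ y in Ioi (0:ℝ), (C + a*y) ^ q * Real.exp (-y))
        - a*q*(∫ y in Ioi (0:ℝ), (C + a*y) ^ (q-1) * Real.exp (-y)) := by
    rw [show ψ = fun y => ((C + a*y) ^ q * Real.exp (-y))
        - a*q*((C + a*y) ^ (q-1) * Real.exp (-y)) from rfl]
    rw [integral_sub (integrableOn_poly_exp ha.le hC (by linarith))
      ((integrableOn_poly_exp ha.le hC (by linarith)).const_mul (a*q)),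
      MeasureTheory.integral_const_mul _ _]
  rw [hsplit] at hkey
  linarith [hkey]

end Lem34

namespace Lem34

noncomputable def JJ (q a b : ℝ) : ℝ :=
  ∫ z : ℝ × ℝ, (a * z.1 + b * z.2) ^ q ∂((expMeasure 1).prod (expMeasure 1))

lemma cont_h {q a b : ℝ} (hq : 0 ≤ q) :
    Continuous fun z : ℝ × ℝ => (a * z.1 + b * z.2) ^ q :=
  (((continuous_const.mul continuous_fst)).add ((continuous_const.mul continuous_snd))).rpow_const
    (fun _ => Or.inr hq)

lemma prod_ae_nonneg :
    ∀ᵐ z : ℝ × ℝ ∂((expMeasure 1).prod (expMeasure 1)), 0 ≤ z.1 ∧ 0 ≤ z.2 := by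
  have h1 : ∀ᵐ z : ℝ × ℝ ∂((expMeasure 1).prod (expMeasure 1)), 0 ≤ z.1 := by
    rw [ae_iff]
    have hs : {z : ℝ × ℝ | ¬ 0 ≤ z.1} = (Iio 0) ×ˢ (univ : Set ℝ) := by
      ext z; simp [not_le]
    rw [hs, Measure.prod_prod]
    have : (expMeasure 1) (Iio 0) = 0 := by
      rw [expMeasure_one_eq, withDensity_apply _ measurableSet_Iio]
      have hz : ∀ᵐ x ∂(volume.restrict (Iio (0:ℝ))), ((ee x).toNNReal : ℝ≥0∞) = 0 := by
        rw [ae_restrict_iff' measurableSet_Iio]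
        filter_upwards with x hx
        rw [ee, if_neg (not_le.mpr hx)]
        simp
      rw [lintegral_congr_ae hz, lintegral_zero]
    rw [this, zero_mul]
  have h2 : ∀ᵐ z : ℝ × ℝ ∂((expMeasure 1).prod (expMeasure 1)), 0 ≤ z.2 := by
    rw [ae_iff]
    have hs : {z : ℝ × ℝ | ¬ 0 ≤ z.2} = (univ : Set ℝ) ×ˢ (Iio 0) := by
      ext z; simp [not_le]
    rw [hs, Measure.prod_prod]
    have : (expMeasure 1) (Iio 0) = 0 := by
      rw [expMeasure_one_eq, withDensity_apply _ measurableSet_Iio]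
      have hz : ∀ᵐ x ∂(volume.restrict (Iio (0:ℝ))), ((ee x).toNNReal : ℝ≥0∞) = 0 := by
        rw [ae_restrict_iff' measurableSet_Iio]
        filter_upwards with x hx
        rw [ee, if_neg (not_le.mpr hx)]
        simp
      rw [lintegral_congr_ae hz, lintegral_zero]
    rw [this, mul_zero]
  filter_upwards [h1, h2] with z hz1 hz2
  exact ⟨hz1, hz2⟩

lemma two_rpow_bound {u v q : ℝ} (hu : 0 ≤ u) (hv : 0 ≤ v) (hq : 0 ≤ q) :
    (u + v) ^ q ≤ 2 ^ q * (u ^ q + v ^ q) := by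
  rcases le_total u v with h | h
  · calc (u + v) ^ q ≤ (2 * v) ^ q := Real.rpow_le_rpow (by linarith) (by linarith) hq
      _ = 2 ^ q * v ^ q := Real.mul_rpow (by norm_num) hv
      _ ≤ 2 ^ q * (u ^ q + v ^ q) := by
          nlinarith [Real.rpow_nonneg hu q, Real.rpow_nonneg (show (0:ℝ) ≤ 2 by norm_num) q]
  · calc (u + v) ^ q ≤ (2 * u) ^ q := Real.rpow_le_rpow (by linarith) (by linarith) hq
      _ = 2 ^ q * u ^ q := Real.mul_rpow (by norm_num) hu
      _ ≤ 2 ^ q * (u ^ q + v ^ q) := by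
          nlinarith [Real.rpow_nonneg hv q, Real.rpow_nonneg (show (0:ℝ) ≤ 2 by norm_num) q]

lemma integrable_fst_rpow {q : ℝ} (hq : 0 < q) :
    Integrable (fun z : ℝ × ℝ => z.1 ^ q) ((expMeasure 1).prod (expMeasure 1)) := by
  have hmap : Measure.map Prod.fst ((expMeasure 1).prod (expMeasure 1)) = expMeasure 1 := by
    rw [Measure.map_fst_prod]
    simp
  have h := (integrable_rpow_nu hq)
  rw [← hmap] at h
  exact h.comp_measurable measurable_fst

lemma integrable_snd_rpow {q : ℝ} (hq : 0 < q) :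
    Integrable (fun z : ℝ × ℝ => z.2 ^ q) ((expMeasure 1).prod (expMeasure 1)) := by
  have hmap : Measure.map Prod.snd ((expMeasure 1).prod (expMeasure 1)) = expMeasure 1 := by
    rw [Measure.map_snd_prod]
    simp
  have h := (integrable_rpow_nu hq)
  rw [← hmap] at h
  exact h.comp_measurable measurable_snd

lemma integrable2 {q a b : ℝ} (ha : 0 ≤ a) (hb : 0 ≤ b) (hq : 0 < q) :
    Integrable (fun z : ℝ × ℝ => (a * z.1 + b * z.2) ^ q)
      ((expMeasure 1).prod (expMeasure 1)) := by
  have hgint : Integrable (fun z : ℝ × ℝ => 2 ^ q * a ^ q * z.1 ^ q + 2 ^ q * b ^ q * z.2 ^ q)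
      ((expMeasure 1).prod (expMeasure 1)) :=
    ((integrable_fst_rpow hq).const_mul _).add ((integrable_snd_rpow hq).const_mul _)
  refine Integrable.mono' hgint (cont_h hq.le).aestronglyMeasurable ?_
  filter_upwards [prod_ae_nonneg] with z hz
  obtain ⟨hz1, hz2⟩ := hz
  have hb1 : 0 ≤ a * z.1 := mul_nonneg ha hz1
  have hb2 : 0 ≤ b * z.2 := mul_nonneg hb hz2
  rw [Real.norm_eq_abs, abs_of_nonneg (Real.rpow_nonneg (by linarith) q)]
  calc (a * z.1 + b * z.2) ^ q ≤ 2 ^ q * ((a * z.1) ^ q + (b * z.2) ^ q) :=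
        two_rpow_bound hb1 hb2 hq.le
    _ = 2 ^ q * a ^ q * z.1 ^ q + 2 ^ q * b ^ q * z.2 ^ q := by
        rw [Real.mul_rpow ha hz1, Real.mul_rpow hb hz2]
        ring

lemma J_swap {q a b : ℝ} (hq : 0 ≤ q) : JJ q a b = JJ q b a := by
  rw [JJ, JJ]
  have hswap : (expMeasure 1).prod (expMeasure 1)
      = Measure.map Prod.swap ((expMeasure 1).prod (expMeasure 1)) := Measure.prod_swap.symm
  conv_lhs => rw [hswap]
  rw [integral_map measurable_swap.aemeasurable]
  · refine integral_congr_ae (Eventually.of_forall fun z => ?_)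
    simp only [Prod.swap]
    rw [add_comm]
  · rw [← hswap]
    exact (cont_h hq).aestronglyMeasurable

lemma J_iter {q a b : ℝ} (ha : 0 ≤ a) (hb : 0 ≤ b) (hq : 0 < q) :
    JJ q a b = ∫ x, ∫ y, (a * x + b * y) ^ q ∂(expMeasure 1) ∂(expMeasure 1) :=
  integral_prod _ (integrable2 ha hb hq)

lemma inner_step {C b q : ℝ} (hC : 0 ≤ C) (hb : 0 < b) (hq : 1 ≤ q) :
    ∫ y, (C + b * y) ^ q ∂(expMeasure 1)
      = C ^ q + b * q * ∫ y, (C + b * y) ^ (q-1) ∂(expMeasure 1) := by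
  rw [integral_nu, integral_nu]
  exact ibp hb hC hq

lemma moment_scale {a q : ℝ} (ha : 0 ≤ a) (hq : 0 < q) :
    ∫ x, (a * x) ^ q ∂(expMeasure 1) = a ^ q * Real.Gamma (q+1) := by
  have hcongr : (fun x : ℝ => (a * x) ^ q) =ᵐ[expMeasure 1] fun x => a ^ q * x ^ q := by
    filter_upwards [nu_ae_nonneg] with x hx
    rw [Real.mul_rpow ha hx]
  rw [integral_congr_ae hcongr, MeasureTheory.integral_const_mul, moment_nu hq]

lemma rec_step {a b q : ℝ} (ha : 0 ≤ a) (hb : 0 < b) (hq : 1 ≤ q) (hq1 : 0 < q - 1) :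
    JJ q a b = a ^ q * Real.Gamma (q+1) + b * q * JJ (q-1) a b := by
  rw [J_iter ha hb.le (by linarith), J_iter ha hb.le hq1]
  have hcongr : (fun x : ℝ => ∫ y, (a * x + b * y) ^ q ∂(expMeasure 1))
      =ᵐ[expMeasure 1] fun x =>
        (a * x) ^ q + b * q * ∫ y, (a * x + b * y) ^ (q-1) ∂(expMeasure 1) := by
    filter_upwards [nu_ae_nonneg] with x hx
    exact inner_step (mul_nonneg ha hx) hb hq
  rw [integral_congr_ae hcongr]
  have t1 : Integrable (fun x : ℝ => (a * x) ^ q) (expMeasure 1) := by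
    have hcongr2 : (fun x : ℝ => a ^ q * x ^ q) =ᵐ[expMeasure 1] fun x => (a * x) ^ q := by
      filter_upwards [nu_ae_nonneg] with x hx
      rw [Real.mul_rpow ha hx]
    exact (Integrable.congr ((integrable_rpow_nu (by linarith)).const_mul (a ^ q)) hcongr2)
  have t2 : Integrable (fun x : ℝ => ∫ y, (a * x + b * y) ^ (q-1) ∂(expMeasure 1))
      (expMeasure 1) := (integrable2 ha hb.le hq1).integral_prod_left
  rw [integral_add t1 (t2.const_mul (b * q)), MeasureTheory.integral_const_mul, moment_scale ha (by linarith)]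

lemma J_formula {a b p : ℝ} (ha0 : 0 ≤ a) (hb : 0 < b) (hab : a < b) (hp : 4 < p) :
    JJ p a b = Real.Gamma (p+1) * ((b ^ (p+1) - a ^ (p+1)) / (b - a)) := by
  have hp0 : (0:ℝ) < p := by linarith
  have hG : Real.Gamma (p+2) = (p+1) * Real.Gamma (p+1) := by
    rw [show p + 2 = (p + 1) + 1 by ring, Real.Gamma_add_one (by linarith)]
  rcases eq_or_lt_of_le ha0 with ha | ha
  · subst ha
    rw [J_iter le_rfl hb.le hp0]
    have hin : ∀ x : ℝ, ∫ y, (0 * x + b * y) ^ p ∂(expMeasure 1)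
        = b ^ p * Real.Gamma (p+1) := by
      intro x
      have h : (fun y : ℝ => (0 * x + b * y) ^ p) = fun y => (b * y) ^ p := by
        funext y; norm_num
      rw [h, moment_scale hb.le hp0]
    rw [integral_congr_ae (Eventually.of_forall hin), MeasureTheory.integral_const]
    simp only [measure_univ, probReal_univ, one_smul]
    rw [Real.zero_rpow (by linarith : p + 1 ≠ 0), sub_zero, sub_zero,
      show b ^ (p+1) = b ^ p * b from by rw [Real.rpow_add hb, Real.rpow_one]]
    field_simp
  · have e1 := rec_step ha0 hb (by linarith : (1:ℝ) ≤ p + 1) (by linarith : (0:ℝ) < p + 1 - 1)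
    have e2 := rec_step hb.le ha (by linarith : (1:ℝ) ≤ p + 1) (by linarith : (0:ℝ) < p + 1 - 1)
    rw [show p + 1 - 1 = p by ring] at e1 e2
    rw [J_swap (by linarith : (0:ℝ) ≤ p + 1), J_swap (by linarith : (0:ℝ) ≤ p)] at e2
    -- e1 : JJ (p+1) a b = a^(p+1) Γ(p+2) + b (p+1) JJ p a b
    -- e2 : JJ (p+1) a b = b^(p+1) Γ(p+2) + a (p+1) JJ p a b
    have hkey : (b - a) * ((p+1) * JJ p a b)
        = (b ^ (p+1) - a ^ (p+1)) * Real.Gamma (p+2) := by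
      rw [show p + 1 + 1 = p + 2 by ring] at e1 e2
      nlinarith [e1, e2]
    rw [hG] at hkey
    have hbane : b - a ≠ 0 := by linarith
    field_simp
    nlinarith [hkey]

end Lem34

namespace Lem34

lemma bb_rpow (p x : ℝ) (h2 : (0:ℝ) ≤ 1 - x ^ 2) :
    bb x ^ (p+1) = (1 - x ^ 2) ^ ((p + 1) / 2) := by
  rw [bb, Real.sqrt_eq_rpow, ← Real.rpow_mul h2]
  congr 1
  ring

end Lem34


open Lem34

/-- **Failure of monotonicity for `p > 4`** (Lemma 3.4): let `p > 4` and let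
`f(x) = ((1 - x²)^{(p+1)/2} - x^{p+1})/(√(1 - x²) - x)` on `[0, 1/√2)`, extended
continuously at `x = 1/√2`. Then `f'(0) = 1`, `f'(1/√2) = 0`,
`f''(1/√2) = (1/3)·2^{1 - p/2}·p(p+1)(p-4) > 0`; consequently `f` is not monotone on
`(0, 1/√2)` and attains a local maximum at an interior point. Moreover
`f(x) = Γ(p+1)⁻¹ E[(x𝓔 + √(1-x²)𝓔')^p]` for i.i.d. standard exponentials `𝓔, 𝓔'`. -/
theorem failure_of_monotonicity
    {Ω : Type*} [MeasurableSpace Ω] (μ : Measure Ω) [IsProbabilityMeasure μ]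
    (E E' : Ω → ℝ) (hE : Measurable E) (hE' : Measurable E')
    (hlawE : Measure.map E μ = expMeasure 1) (hlawE' : Measure.map E' μ = expMeasure 1)
    (hEE' : IndepFun E E' μ)
    (p : ℝ) (hp : 4 < p) (f : ℝ → ℝ)
    (hf : ∀ x : ℝ, 0 ≤ x → x < (Real.sqrt 2)⁻¹ →
      f x = ((1 - x ^ 2) ^ ((p + 1) / 2) - x ^ (p + 1)) / (Real.sqrt (1 - x ^ 2) - x))
    (hcont : ContinuousOn f (Icc 0 (Real.sqrt 2)⁻¹)) :
    derivWithin f (Icc 0 (Real.sqrt 2)⁻¹) 0 = 1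
    ∧ derivWithin f (Icc 0 (Real.sqrt 2)⁻¹) (Real.sqrt 2)⁻¹ = 0
    ∧ derivWithin (fun y => derivWithin f (Icc 0 (Real.sqrt 2)⁻¹) y)
        (Icc 0 (Real.sqrt 2)⁻¹) (Real.sqrt 2)⁻¹
        = (1 / 3) * 2 ^ (1 - p / 2) * (p * (p + 1) * (p - 4))
    ∧ 0 < (1 / 3) * (2 : ℝ) ^ (1 - p / 2) * (p * (p + 1) * (p - 4))
    ∧ ¬ MonotoneOn f (Ioo 0 (Real.sqrt 2)⁻¹)
    ∧ ¬ AntitoneOn f (Ioo 0 (Real.sqrt 2)⁻¹)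
    ∧ (∃ x ∈ Ioo (0 : ℝ) (Real.sqrt 2)⁻¹, IsLocalMax f x)
    ∧ ∀ x : ℝ, 0 ≤ x → x ≤ (Real.sqrt 2)⁻¹ →
        f x = (Real.Gamma (p + 1))⁻¹
          * ∫ ω, (x * E ω + Real.sqrt (1 - x ^ 2) * E' ω) ^ p ∂μ := by
  have hccdef : (Real.sqrt 2)⁻¹ = cc := rfl
  rw [hccdef] at hf hcont ⊢
  have hp0 : (0:ℝ) < p := by linarith
  have hΓpos : 0 < Real.Gamma (p+1) := Real.Gamma_pos_of_pos (by linarith)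
  -- pushforward identity
  have hmap : μ.map (fun ω => (E ω, E' ω)) = (expMeasure 1).prod (expMeasure 1) := by
    rw [(ProbabilityTheory.indepFun_iff_map_prod_eq_prod_map_map
      hE.aemeasurable hE'.aemeasurable).mp hEE', hlawE, hlawE']
  have hpush : ∀ a b : ℝ, ∫ ω, (a * E ω + b * E' ω) ^ p ∂μ = JJ p a b := by
    intro a b
    rw [JJ, ← hmap, integral_map (hE.prodMk hE').aemeasurable
      (by rw [hmap]; exact (cont_h hp0.le).aestronglyMeasurable)]
  -- the identity on [0, cc)
  have hcase : ∀ x : ℝ, 0 ≤ x → x < cc →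
      f x = (Real.Gamma (p + 1))⁻¹
        * ∫ ω, (x * E ω + Real.sqrt (1 - x ^ 2) * E' ω) ^ p ∂μ := by
    intro x hx0 hxc
    have hsb : Real.sqrt (1 - x ^ 2) = bb x := rfl
    have hxb : x < bb x := x_lt_bb (p := p) hx0 hxc
    have hbpos : 0 < bb x := lt_of_le_of_lt hx0 hxb
    rw [hsb, hpush x (bb x), J_formula hx0 hbpos hxb hp, hf x hx0 hxc,
      inv_mul_cancel_left₀ (ne_of_gt hΓpos)]
    rw [bb_rpow p x (by nlinarith [bb_sq (show x^2 ≤ 1 by nlinarith [bb_le_one x]), sq_nonneg (bb x)] : (0:ℝ) ≤ 1 - x ^ 2)]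
    rfl
  refine ⟨derivWithin_zero hp hf, ?_, derivWithin2_cc hp hf hcont, target_pos hp,
    not_mono hp hf hcont, not_anti hp hf hcont, local_max hp hf hcont, ?_⟩
  · rw [derivWithin_cc hp hf hcont, F1_cc hp]
  · intro x hx0 hxc
    rcases lt_or_eq_of_le hxc with hlt | heq
    · exact hcase x hx0 hlt
    · subst heq
      -- continuity argument at cc
      have hEnn : ∀ᵐ ω ∂μ, 0 ≤ E ω := by
        have h := nu_ae_nonneg
        rw [← hlawE] at h
        exact (ae_map_iff hE.aemeasurable measurableSet_Ici).mp h
      have hE'nn : ∀ᵐ ω ∂μ, 0 ≤ E' ω := by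
        have h := nu_ae_nonneg
        rw [← hlawE'] at h
        exact (ae_map_iff hE'.aemeasurable measurableSet_Ici).mp h
      have hintE : Integrable (fun ω => E ω ^ p) μ := by
        have h : Integrable (fun x : ℝ => x ^ p) (Measure.map E μ) := by
          rw [hlawE]; exact integrable_rpow_nu hp0
        exact h.comp_measurable hE
      have hintE' : Integrable (fun ω => E' ω ^ p) μ := by
        have h : Integrable (fun x : ℝ => x ^ p) (Measure.map E' μ) := by
          rw [hlawE']; exact integrable_rpow_nu hp0
        exact h.comp_measurable hE'
      have hNB : (𝓝[Ico 0 cc] cc).NeBot := by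
        rw [← mem_closure_iff_nhdsWithin_neBot, closure_Ico cc_pos.ne]
        exact ⟨cc_pos.le, le_rfl⟩
      have hT : Tendsto (fun t => ∫ ω, (t * E ω + Real.sqrt (1 - t ^ 2) * E' ω) ^ p ∂μ)
          (𝓝[Ico 0 cc] cc)
          (𝓝 (∫ ω, (cc * E ω + Real.sqrt (1 - cc ^ 2) * E' ω) ^ p ∂μ)) := by
        apply tendsto_integral_filter_of_dominated_convergence
          (bound := fun ω => 2 ^ p * (E ω ^ p + E' ω ^ p))
        · filter_upwards with t
          have hmeas : Measurable fun ω => t * E ω + Real.sqrt (1 - t ^ 2) * E' ω :=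
            (hE.const_mul t).add (hE'.const_mul _)
          exact ((Real.continuous_rpow_const hp0.le).measurable.comp hmeas).aestronglyMeasurable
        · filter_upwards [self_mem_nhdsWithin] with t ht
          filter_upwards [hEnn, hE'nn] with ω h1 h2
          have ht0 : 0 ≤ t := ht.1
          have ht1 : t ≤ 1 := by
            have := cc_mem.2
            linarith [ht.2]
          have hs1 : Real.sqrt (1 - t ^ 2) ≤ 1 := bb_le_one t
          have hs0 : 0 ≤ Real.sqrt (1 - t ^ 2) := Real.sqrt_nonneg _
          have hb0 : 0 ≤ t * E ω + Real.sqrt (1 - t ^ 2) * E' ω := by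
            have := mul_nonneg ht0 h1
            have := mul_nonneg hs0 h2
            linarith
          rw [Real.norm_eq_abs, abs_of_nonneg (Real.rpow_nonneg hb0 _)]
          calc (t * E ω + Real.sqrt (1 - t ^ 2) * E' ω) ^ p ≤ (E ω + E' ω) ^ p := by
                apply Real.rpow_le_rpow hb0 _ hp0.le
                nlinarith
            _ ≤ 2 ^ p * (E ω ^ p + E' ω ^ p) := two_rpow_bound h1 h2 hp0.le
        · exact ((hintE.add hintE').const_mul _)
        · filter_upwards with ω
          have hcont2 : Continuous fun t : ℝ => t * E ω + Real.sqrt (1 - t ^ 2) * E' ω :=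
            (continuous_id.mul continuous_const).add
              ((Real.continuous_sqrt.comp (continuous_const.sub (continuous_pow 2))).mul
                continuous_const)
          have := ((Real.continuous_rpow_const hp0.le).comp hcont2).continuousAt (x := cc)
          exact this.tendsto.mono_left nhdsWithin_le_nhds
      have hG : Tendsto (fun t => (Real.Gamma (p + 1))⁻¹
          * ∫ ω, (t * E ω + Real.sqrt (1 - t ^ 2) * E' ω) ^ p ∂μ) (𝓝[Ico 0 cc] cc)
          (𝓝 ((Real.Gamma (p + 1))⁻¹
            * ∫ ω, (cc * E ω + Real.sqrt (1 - cc ^ 2) * E' ω) ^ p ∂μ)) :=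
        hT.const_mul _
      have hFt : Tendsto f (𝓝[Ico 0 cc] cc) (𝓝 (f cc)) :=
        (hcont cc ⟨cc_pos.le, le_rfl⟩).mono Ico_subset_Icc_self
      have hFt2 : Tendsto f (𝓝[Ico 0 cc] cc)
          (𝓝 ((Real.Gamma (p + 1))⁻¹
            * ∫ ω, (cc * E ω + Real.sqrt (1 - cc ^ 2) * E' ω) ^ p ∂μ)) := by
        refine hG.congr' ?_
        filter_upwards [self_mem_nhdsWithin] with t ht
        exact (hcase t ht.1 ht.2).symm
      exact tendsto_nhds_unique hFt hFt2
end
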